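/- arXiv:math/9201260 — 4 statements merged into one kernel-verified Lean document; each statement's English description precedes it below -/
import Mathlib

section
/- An entire function f : ℂ → ℂ, not identically zero, which satisfies |f(z)| ≤ C·exp(C·|z|^ρ) for all z with ρ = m/(m-1) for some integer m ≥ 3, and satisfies |f(x)| ≥ δ·exp(δ·|x|^ρ) for all real x for some δ > 0, must have at least one zero in ℂ. -/
open Metric Set Filter

/-- Every entire function has a primitive. -/
lemma exists_primitive {h : ℂ → ℂ} (hh : Differentiable ℂ h) :
    ∃ g : ℂ → ℂ, ∀ z, HasDerivAt g (h z) z := by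
  set c : ℕ → ℂ := fun n => (Nat.factorial n : ℂ)⁻¹ * iteratedDeriv n h 0 with hc
  have hsum : ∀ z : ℂ, HasSum (fun n => c n * z ^ n) (h z) := by
    intro z
    have := Complex.hasSum_taylorSeries_of_entire hh 0 z
    convert this using 2 with n
    · rfl
    simp only [hc, smul_eq_mul, sub_zero]
    ring
  refine ⟨fun z => ∑' n, c n / (n + 1) * z ^ (n + 1), fun z₀ => ?_⟩
  set r : ℝ := ‖z₀‖ + 1 with hr
  have hr0 : 0 < r := by positivity
  have key := hasDerivAt_tsum_of_isPreconnected
    (u := fun n => ‖c n * (r : ℂ) ^ n‖)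
    (g := fun n z => c n / (n + 1) * z ^ (n + 1))
    (g' := fun n z => c n * z ^ n)
    (t := ball (0 : ℂ) r) (y₀ := (0 : ℂ)) (y := z₀)
    ?_ isOpen_ball (convex_ball _ _).isPreconnected ?_ ?_ ?_ ?_ ?_
  · have h1 : (∑' n, c n * z₀ ^ n) = h z₀ := (hsum z₀).tsum_eq
    rw [h1] at key
    exact key
  · exact (summable_norm_iff.mpr (hsum (r : ℂ)).summable)
  · intro n y _
    have h1 := (hasDerivAt_pow (n + 1) y).const_mul (c n / (n + 1))
    refine h1.congr_deriv ?_
    have : ((n : ℂ) + 1) ≠ 0 := Nat.cast_add_one_ne_zero n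
    push_cast
    rw [div_mul_eq_mul_div, div_eq_iff this]
    ring
  · intro n y hy
    rw [mem_ball, dist_zero_right] at hy
    have hrn : ‖(r : ℂ)‖ = r := by
      rw [Complex.norm_real, Real.norm_eq_abs, abs_of_pos hr0]
    simp only [norm_mul, norm_pow, hrn]
    gcongr
  · exact mem_ball_self hr0
  · refine Summable.of_norm_bounded summable_zero fun n => ?_
    simp
  · rw [mem_ball, dist_zero_right]; linarith

/-- A nonvanishing entire function has an entire logarithm. -/
lemma exists_log {f : ℂ → ℂ} (hf : Differentiable ℂ f) (h0 : ∀ z, f z ≠ 0) :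
    ∃ g : ℂ → ℂ, Differentiable ℂ g ∧ ∀ z, f z = Complex.exp (g z) := by
  have hd : Differentiable ℂ (deriv f) := by
    exact (contDiff_infty_iff_deriv.mp hf.contDiff).2.differentiable (by simp)
  have hh : Differentiable ℂ fun z => deriv f z / f z := hd.div hf h0
  obtain ⟨g0, hg0⟩ := exists_primitive hh
  have hg0d : Differentiable ℂ g0 := fun z => (hg0 z).differentiableAt
  set F : ℂ → ℂ := fun z => f z * Complex.exp (-g0 z) with hF
  have hFd : ∀ z, HasDerivAt F 0 z := by
    intro z
    have h1 : HasDerivAt (fun z => f z * Complex.exp (-g0 z)) (deriv f z * Complex.exp (-g0 z) + f z * (Complex.exp (-g0 z) * -(deriv f z / f z))) z := (hf z).hasDerivAt.mul ((hg0 z).neg.cexp)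
    convert h1 using 1
    field_simp [h0 z]
    ring
  have hconst : ∀ z, F z = F 0 :=
    fun z => is_const_of_deriv_eq_zero (fun w => (hFd w).differentiableAt)
      (fun w => (hFd w).deriv) z 0
  have hF0 : F 0 ≠ 0 := mul_ne_zero (h0 0) (Complex.exp_ne_zero _)
  refine ⟨fun z => g0 z + Complex.log (F 0), fun z => (hg0d z).add_const _, fun z => ?_⟩
  have h2 : f z = F z * Complex.exp (g0 z) := by
    rw [hF]; simp [mul_assoc, ← Complex.exp_add]
  rw [h2, hconst z, Complex.exp_add, Complex.exp_log hF0]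
  ring


lemma norm_le_norm_two_mul_sub {u : ℂ} {M : ℝ} (hM : 0 < M) (hre : u.re ≤ M) :
    ‖u‖ ≤ ‖((2 * M : ℝ) : ℂ) - u‖ := by
  have h1 : ‖u‖ = Real.sqrt (u.re * u.re + u.im * u.im) := by
    rw [Complex.norm_def, Complex.normSq_apply]
  have h2 : ‖((2 * M : ℝ) : ℂ) - u‖
      = Real.sqrt ((2 * M - u.re) * (2 * M - u.re) + u.im * u.im) := by
    rw [Complex.norm_def, Complex.normSq_apply]
    norm_num
  rw [h1, h2]
  apply Real.sqrt_le_sqrt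
  nlinarith

lemma affine_of_re_le {g : ℂ → ℂ} (hg : Differentiable ℂ g) (A B ρ : ℝ)
    (hB : 0 < B) (hρ0 : 0 < ρ) (hρ2 : ρ < 2)
    (hbound : ∀ z, (g z).re ≤ A + B * ‖z‖ ^ ρ) :
    ∃ a : ℂ, ∀ z, g z = g 0 + a * z := by
  set A' : ℝ := |A| + ‖g 0‖ + 1 with hA'def
  have hA' : 0 < A' := by positivity
  set K : ℝ := 2 * (A' + B * 4 ^ ρ) with hKdef
  have h4ρ : (0:ℝ) < 4 ^ ρ := Real.rpow_pos_of_pos (by norm_num) ρ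
  have hK : 0 < K := by positivity
  have key : ∀ z : ℂ, ‖g z - g 0‖ ≤ K * (1 + ‖z‖) ^ ρ := by
    intro z
    set R : ℝ := 2 * ‖z‖ + 1 with hR
    have hR1 : 1 ≤ R := by have := norm_nonneg z; simp only [hR]; linarith
    have hR0 : 0 < R := by linarith
    set M : ℝ := A' + B * (2 * R) ^ ρ with hMdef
    have h2Rρ : (0:ℝ) < (2 * R) ^ ρ := Real.rpow_pos_of_pos (by linarith) ρ
    have hMpos : 0 < M := by positivity
    set u : ℂ → ℂ := fun w => g w - g 0 with hu
    have hreM : ∀ w ∈ Metric.ball (0:ℂ) (2*R), (u w).re ≤ M := by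
      intro w hw
      rw [mem_ball, dist_zero_right] at hw
      have h1 : (g w).re ≤ A + B * ‖w‖ ^ ρ := hbound w
      have h2 : ‖w‖ ^ ρ ≤ (2*R) ^ ρ := Real.rpow_le_rpow (norm_nonneg w) hw.le hρ0.le
      have h2' : B * ‖w‖ ^ ρ ≤ B * (2*R) ^ ρ := by gcongr
      have h3 : |(g 0).re| ≤ ‖g 0‖ := by
        exact Complex.abs_re_le_norm (g 0)
      have h3' : -‖g 0‖ ≤ (g 0).re := by
        have := abs_le.mp h3; linarith [this.1]
      have hA : A ≤ |A| := le_abs_self A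
      simp only [hu, Complex.sub_re]
      simp only [hMdef, hA'def]
      linarith
    have hden : ∀ w ∈ Metric.ball (0:ℂ) (2*R), ((2*M : ℝ) : ℂ) - u w ≠ 0 := by
      intro w hw h0
      have h1 : (((2*M : ℝ):ℂ) - u w).re = 2*M - (u w).re := by
        simp [Complex.sub_re]
      rw [h0] at h1
      simp only [Complex.zero_re] at h1
      have := hreM w hw
      linarith
    set φ : ℂ → ℂ := fun w => u w / (((2*M:ℝ):ℂ) - u w) with hφdef
    have hφ0 : φ 0 = 0 := by simp [hφdef, hu]
    have hφd : DifferentiableOn ℂ φ (Metric.ball (0:ℂ) (2*R)) := by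
      apply DifferentiableOn.div
      · exact (hg.sub_const (g 0)).differentiableOn
      · exact ((differentiable_const _).sub (hg.sub_const (g 0))).differentiableOn
      · exact hden
    have hmaps : Set.MapsTo φ (Metric.ball (0:ℂ) (2*R)) (Metric.ball (φ 0) 2) := by
      intro w hw
      rw [hφ0, mem_ball, dist_zero_right]
      have h1 : ‖u w‖ ≤ ‖((2*M:ℝ):ℂ) - u w‖ := norm_le_norm_two_mul_sub hMpos (hreM w hw)
      have h2 : 0 < ‖((2*M:ℝ):ℂ) - u w‖ := norm_pos_iff.mpr (hden w hw)
      calc ‖φ w‖ = ‖u w‖ / ‖((2*M:ℝ):ℂ) - u w‖ := norm_div _ _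
        _ ≤ 1 := (div_le_one h2).mpr h1
        _ < 2 := one_lt_two
    have hz2R : z ∈ Metric.ball (0:ℂ) (2*R) := by
      rw [mem_ball, dist_zero_right]; simp only [hR]; linarith [norm_nonneg z]
    have hschwarz := Complex.dist_le_div_mul_dist_of_mapsTo_ball hφd (hmaps.mono_right ball_subset_closedBall) hz2R
    rw [hφ0, dist_zero_right, dist_zero_right] at hschwarz
    have hhalf : ‖φ z‖ ≤ 1/2 := by
      have h4 : 2/(2*R) * ‖z‖ ≤ 1/2 := by
        rw [div_mul_eq_mul_div, div_le_div_iff₀ (by linarith) (by norm_num)]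
        simp only [hR]; nlinarith [norm_nonneg z]
      linarith
    have heq : u z = φ z * (((2*M:ℝ):ℂ) - u z) := (div_mul_cancel₀ _ (hden z hz2R)).symm
    have hnormeq : ‖u z‖ = ‖φ z‖ * ‖((2*M:ℝ):ℂ) - u z‖ := by
      conv_lhs => rw [heq]
      rw [norm_mul]
    have htri : ‖((2*M:ℝ):ℂ) - u z‖ ≤ 2*M + ‖u z‖ := by
      calc ‖((2*M:ℝ):ℂ) - u z‖ ≤ ‖((2*M:ℝ):ℂ)‖ + ‖u z‖ := norm_sub_le _ _
        _ = 2*M + ‖u z‖ := by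
            rw [Complex.norm_real, Real.norm_eq_abs, abs_of_pos (by linarith)]
    have hfinal : ‖u z‖ ≤ 2*M := by
      nlinarith [hnormeq, htri, hhalf, norm_nonneg (φ z),
        norm_nonneg (((2*M:ℝ):ℂ) - u z), norm_nonneg (u z)]
    have hone : (1:ℝ) ≤ (1 + ‖z‖) ^ ρ := by
      calc (1:ℝ) = 1 ^ ρ := (Real.one_rpow ρ).symm
        _ ≤ (1+‖z‖)^ρ :=
            Real.rpow_le_rpow zero_le_one (by linarith [norm_nonneg z]) hρ0.le
    have h2R : (2*R) ^ ρ ≤ 4^ρ * (1+‖z‖)^ρ := by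
      rw [← Real.mul_rpow (by norm_num) (by positivity)]
      apply Real.rpow_le_rpow (by linarith) ?_ hρ0.le
      simp only [hR]; linarith [norm_nonneg z]
    calc ‖g z - g 0‖ = ‖u z‖ := rfl
      _ ≤ 2*M := hfinal
      _ = 2*A' + 2*B*(2*R)^ρ := by simp only [hMdef]; ring
      _ ≤ 2*A'*(1+‖z‖)^ρ + 2*B*(4^ρ*(1+‖z‖)^ρ) := by
          have h6 : 2*B*(2*R)^ρ ≤ 2*B*(4^ρ*(1+‖z‖)^ρ) := by gcongr
          have h5 : 2*A' ≤ 2*A'*(1+‖z‖)^ρ := le_mul_of_one_le_right (by positivity) hone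
          linarith
      _ = K * (1+‖z‖)^ρ := by simp only [hKdef]; ring
  -- Step 2: Liouville via dslope
  have hgd1 : Differentiable ℂ (dslope g 0) := by
    rw [← differentiableOn_univ]
    exact (Complex.differentiableOn_dslope Filter.univ_mem).mpr hg.differentiableOn
  set h₁ : ℂ → ℂ := dslope g 0 with hh₁
  set h₂ : ℂ → ℂ := dslope h₁ 0 with hh₂
  have hgd2 : Differentiable ℂ h₂ := by
    rw [← differentiableOn_univ]
    exact (Complex.differentiableOn_dslope Filter.univ_mem).mpr hgd1.differentiableOn
  have hb1 : ∀ z : ℂ, 1 ≤ ‖z‖ → ‖h₂ z‖ ≤ K * 2^ρ * ‖z‖ ^ (ρ - 2) + ‖h₁ 0‖ * ‖z‖⁻¹ := by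
    intro z hz1
    have hzpos : (0:ℝ) < ‖z‖ := by linarith
    have hz0 : z ≠ 0 := by
      intro h; rw [h] at hz1; simp at hz1; linarith
    have e1 : h₁ z = (g z - g 0) / z := by
      rw [hh₁, dslope_of_ne _ hz0, slope_def_field]; rw [sub_zero]
    have e2 : h₂ z = (h₁ z - h₁ 0) / z := by
      rw [hh₂, dslope_of_ne _ hz0, slope_def_field]; rw [sub_zero]
    have b1 : ‖h₁ z‖ ≤ K * (1+‖z‖)^ρ / ‖z‖ := by
      rw [e1, norm_div]; gcongr; exact key z
    have b2'' : (2*‖z‖)^ρ = 2^ρ * ‖z‖^ρ := Real.mul_rpow (by norm_num) (norm_nonneg z)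
    have b2 : K * (1+‖z‖)^ρ ≤ K * 2^ρ * ‖z‖^ρ := by
      have h' : (1+‖z‖)^ρ ≤ 2^ρ * ‖z‖^ρ := by
        rw [← b2'']
        exact Real.rpow_le_rpow (by positivity) (by linarith) hρ0.le
      calc K * (1+‖z‖)^ρ ≤ K * (2^ρ * ‖z‖^ρ) := mul_le_mul_of_nonneg_left h' hK.le
        _ = K * 2^ρ * ‖z‖^ρ := (mul_assoc _ _ _).symm
    have b3 : ‖h₁ z‖ ≤ K * 2^ρ * ‖z‖^ρ / ‖z‖ := b1.trans (by gcongr)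
    have hpow : ‖z‖ ^ (ρ - 2) = ‖z‖^ρ / (‖z‖ * ‖z‖) := by
      rw [Real.rpow_sub hzpos]
      congr 1
      rw [show (2:ℝ) = ((2:ℕ):ℝ) by norm_num, Real.rpow_natCast]
      ring
    calc ‖h₂ z‖ = ‖h₁ z - h₁ 0‖ / ‖z‖ := by rw [e2, norm_div]
      _ ≤ (‖h₁ z‖ + ‖h₁ 0‖) / ‖z‖ := by gcongr; exact norm_sub_le _ _
      _ ≤ (K * 2^ρ * ‖z‖^ρ / ‖z‖ + ‖h₁ 0‖) / ‖z‖ := by gcongr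
      _ = K * 2^ρ * ‖z‖ ^ (ρ-2) + ‖h₁ 0‖ * ‖z‖⁻¹ := by
          rw [hpow]; field_simp
  have hbdd : Bornology.IsBounded (Set.range h₂) := by
    obtain ⟨C₁, hC₁⟩ := (isCompact_closedBall (0:ℂ) 1).exists_bound_of_continuousOn
      hgd2.continuous.continuousOn
    rw [isBounded_iff_forall_norm_le]
    refine ⟨max C₁ (K*2^ρ + ‖h₁ 0‖), ?_⟩
    rintro _ ⟨z, rfl⟩
    rcases le_total ‖z‖ 1 with h | h
    · exact le_max_of_le_left (hC₁ z (by simpa [mem_closedBall, dist_zero_right] using h))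
    · refine le_max_of_le_right ?_
      have hb := hb1 z h
      have g1 : ‖z‖ ^ (ρ-2) ≤ 1 := Real.rpow_le_one_of_one_le_of_nonpos h (by linarith)
      have g2 : ‖z‖⁻¹ ≤ 1 := inv_le_one_of_one_le₀ h
      have g3 : (0:ℝ) ≤ K*2^ρ := by positivity
      have g4 : (0:ℝ) ≤ ‖h₁ 0‖ := norm_nonneg _
      have g5 : (0:ℝ) ≤ ‖z‖⁻¹ := by positivity
      have g6 : (0:ℝ) ≤ ‖z‖ ^ (ρ-2) := Real.rpow_nonneg (by linarith) _
      nlinarith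
  have hconst : ∀ z w : ℂ, h₂ z = h₂ w := fun z w =>
    hgd2.apply_eq_apply_of_bounded hbdd z w
  have hzero : ∀ w : ℂ, h₂ w = 0 := by
    intro w
    have hle : ∀ t : ℝ, 1 ≤ t → ‖h₂ w‖ ≤ K*2^ρ * t^(ρ-2) + ‖h₁ 0‖ * t⁻¹ := by
      intro t ht
      have hnt : ‖(t:ℂ)‖ = t := by
        rw [Complex.norm_real, Real.norm_eq_abs, abs_of_pos (by linarith)]
      have h1 := hb1 (t:ℂ) (by rw [hnt]; exact ht)
      rw [hnt] at h1
      rw [hconst w (t:ℂ)]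
      exact h1
    have hlim : Filter.Tendsto (fun t : ℝ => K*2^ρ * t^(ρ-2) + ‖h₁ 0‖ * t⁻¹)
        Filter.atTop (nhds 0) := by
      have l1 : Filter.Tendsto (fun t:ℝ => t ^ (ρ-2)) Filter.atTop (nhds 0) := by
        have := tendsto_rpow_neg_atTop (y := 2 - ρ) (by linarith)
        convert this using 2 with t
        ring_nf
      have l2 : Filter.Tendsto (fun t:ℝ => t⁻¹) Filter.atTop (nhds (0:ℝ)) :=
        tendsto_inv_atTop_zero
      have := (l1.const_mul (K*2^ρ)).add (l2.const_mul ‖h₁ 0‖)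
      simpa using this
    have hle0 : ‖h₂ w‖ ≤ 0 :=
      ge_of_tendsto hlim (Filter.eventually_atTop.mpr ⟨1, fun t ht => hle t ht⟩)
    simpa using norm_le_zero_iff.mp hle0
  have h1const : ∀ z : ℂ, h₁ z = h₁ 0 := by
    intro z
    have hs := sub_smul_dslope h₁ 0 z
    rw [← hh₂] at hs
    rw [hzero z] at hs
    simp only [smul_zero] at hs
    exact sub_eq_zero.mp hs.symm
  exact ⟨h₁ 0, fun z => by
    have hs := sub_smul_dslope g 0 z
    rw [← hh₁, h1const z] at hs
    simp only [sub_zero, smul_eq_mul] at hs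
    linear_combination -hs⟩

theorem entire_growth_has_zero (m : ℕ) (hm : 3 ≤ m) (f : ℂ → ℂ)
    (hf : Differentiable ℂ f) (hne : ∃ z, f z ≠ 0)
    (C : ℝ) (hC : 0 < C)
    (hub : ∀ z : ℂ, ‖f z‖ ≤ C * Real.exp (C * ‖z‖ ^ ((m : ℝ) / (m - 1))))
    (δ : ℝ) (hδ : 0 < δ)
    (hlb : ∀ x : ℝ, δ * Real.exp (δ * |x| ^ ((m : ℝ) / (m - 1))) ≤ ‖f x‖) :
    ∃ z : ℂ, f z = 0 := by
  by_contra hzero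
  push_neg at hzero
  set ρ : ℝ := (m : ℝ) / ((m : ℝ) - 1) with hρdef
  have hm3 : (3:ℝ) ≤ (m:ℝ) := by exact_mod_cast hm
  have hden : (0:ℝ) < (m:ℝ) - 1 := by linarith
  have hρ0 : 0 < ρ := by positivity
  have hρ1 : 1 ≤ ρ := by
    rw [hρdef, le_div_iff₀ hden]; linarith
  have hρ2 : ρ < 2 := by
    rw [hρdef, div_lt_iff₀ hden]; linarith
  obtain ⟨g, hgd, hfg⟩ := exists_log hf hzero
  have hre : ∀ z : ℂ, (g z).re ≤ Real.log C + C * ‖z‖ ^ ρ := by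
    intro z
    have h1 : Real.exp ((g z).re) = ‖f z‖ := by
      rw [hfg z, Complex.norm_exp]
    have h2 := hub z
    rw [← h1] at h2
    have h3 := Real.log_le_log (Real.exp_pos _) h2
    rwa [Real.log_exp, Real.log_mul hC.ne' (Real.exp_ne_zero _), Real.log_exp] at h3
  obtain ⟨a, ha⟩ := affine_of_re_le hgd (Real.log C) C ρ hC hρ0 hρ2 hre
  set b : ℂ := g 0 with hb
  have hlow : ∀ t : ℝ, 1 ≤ t → t ^ ρ ≤ (b.re - Real.log δ) / δ := by
    intro t ht
    have htpos : (0:ℝ) < t := by linarith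
    obtain ⟨x, hxabs, hxa⟩ : ∃ x : ℝ, |x| = t ∧ x * a.re ≤ 0 := by
      rcases le_or_gt a.re 0 with hs | hs
      · exact ⟨t, abs_of_pos htpos, mul_nonpos_of_nonneg_of_nonpos htpos.le hs⟩
      · refine ⟨-t, by rw [abs_neg]; exact abs_of_pos htpos, by nlinarith⟩
    have h1 := hlb x
    have h2 : ‖f (x:ℂ)‖ = Real.exp (b.re + x * a.re) := by
      rw [hfg, Complex.norm_exp, ha]
      congr 1
      simp [Complex.add_re, Complex.mul_re]
      ring
    rw [hxabs, h2] at h1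
    have h3 : δ * Real.exp (δ * t ^ ρ) ≤ Real.exp b.re := by
      refine h1.trans ?_
      apply Real.exp_le_exp.mpr
      linarith
    have h4 := Real.log_le_log (by positivity) h3
    rw [Real.log_mul hδ.ne' (Real.exp_ne_zero _), Real.log_exp, Real.log_exp] at h4
    rw [le_div_iff₀ hδ]
    nlinarith
  set T : ℝ := max 1 ((b.re - Real.log δ) / δ + 1) with hT
  have hT1 : (1:ℝ) ≤ T := le_max_left _ _
  have h5 := hlow T hT1
  have h6 : T ≤ T ^ ρ := by
    calc T = T ^ (1:ℝ) := (Real.rpow_one T).symm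
      _ ≤ T ^ ρ := Real.rpow_le_rpow_of_exponent_le hT1 hρ1
  have h7 : (b.re - Real.log δ) / δ + 1 ≤ T := le_max_right _ _
  linarith
end

section
/- If u : ℂ → ℝ is harmonic on all of ℂ and satisfies |u(z)| ≤ C·(1 + |z|)^d for some constants C > 0 and real d ≥ 0, then u is (the restriction to ℂ ≅ ℝ² of) a polynomial function of degree at most ⌊d⌋. -/
open Complex ContinuousLinearMap

noncomputable def gfun (u : ℂ → ℝ) (z : ℂ) : ℂ :=
  (fderiv ℝ u z 1 : ℂ) - (fderiv ℝ u z Complex.I : ℂ) * Complex.I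

lemma hasFDerivAt_fderiv_apply {u : ℂ → ℝ} (hu : ContDiff ℝ 2 u) (c z : ℂ) :
    HasFDerivAt (fun w => fderiv ℝ u w c)
      ((ContinuousLinearMap.apply ℝ ℝ c).comp (fderiv ℝ (fderiv ℝ u) z)) z := by
  have h1 : ContDiff ℝ 1 (fderiv ℝ u) := hu.fderiv_right (by norm_num)
  exact (ContinuousLinearMap.apply ℝ ℝ c).hasFDerivAt.comp z
    (h1.differentiable (by norm_num) z).hasFDerivAt

lemma clm_eq_on_basis {L L' : ℂ →L[ℝ] ℂ} (h1 : L 1 = L' 1) (hI : L Complex.I = L' Complex.I) :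
    L = L' := by
  ext w
  have hw : w = w.re • (1 : ℂ) + w.im • Complex.I := by
    simp [Complex.real_smul]
  rw [hw, map_add, map_add, _root_.map_smul, _root_.map_smul, _root_.map_smul, _root_.map_smul, h1, hI]

lemma gfun_differentiable {u : ℂ → ℝ} (hu : ContDiff ℝ 2 u)
    (hharm : ∀ z : ℂ,
      fderiv ℝ (fun w => fderiv ℝ u w 1) z 1
        + fderiv ℝ (fun w => fderiv ℝ u w Complex.I) z Complex.I = 0) :
    Differentiable ℂ (gfun u) := by
  intro z
  set A := fderiv ℝ (fderiv ℝ u) z with hA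
  have hx := hasFDerivAt_fderiv_apply hu 1 z
  have hy := hasFDerivAt_fderiv_apply hu Complex.I z
  have hgR : HasFDerivAt (gfun u)
      ((((ContinuousLinearMap.apply ℝ ℝ (1:ℂ)).comp A).smulRight (1:ℂ))
        - (((ContinuousLinearMap.apply ℝ ℝ Complex.I).comp A).smulRight Complex.I)) z := by
    have h := (hx.smul_const (1:ℂ)).sub (hy.smul_const Complex.I)
    have hfun : gfun u = fun x => fderiv ℝ u x 1 • (1:ℂ) - fderiv ℝ u x Complex.I • Complex.I :=
      funext fun w => by simp [gfun, Complex.real_smul]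
    rw [hfun]; exact h
  have hharm' : A 1 1 + A Complex.I Complex.I = 0 := by
    have h := hharm z
    rw [hx.fderiv, hy.fderiv] at h
    simpa using h
  have hsymm : A 1 Complex.I = A Complex.I 1 := by
    have := (hu.contDiffAt (x := z)).isSymmSndFDerivAt (by simp [minSmoothness_of_isRCLikeNormedField])
    exact this 1 Complex.I
  set c : ℂ := (A 1 1 : ℝ) - (A 1 Complex.I : ℝ) * Complex.I with hc
  have hre : ((c • (1 : ℂ →L[ℂ] ℂ)).restrictScalars ℝ) =
      ((((ContinuousLinearMap.apply ℝ ℝ (1:ℂ)).comp A).smulRight (1:ℂ))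
        - (((ContinuousLinearMap.apply ℝ ℝ Complex.I).comp A).smulRight Complex.I)) := by
    apply clm_eq_on_basis
    · simp [hc, Complex.real_smul]
    · simp [hc, Complex.real_smul, hsymm]
      have : A Complex.I Complex.I = - A 1 1 := by linarith
      rw [this]
      push_cast
      linear_combination (-(((A Complex.I) 1 : ℝ) : ℂ)) * Complex.I_sq
  exact (hasFDerivAt_of_restrictScalars ℝ hgR hre).differentiableAt
open Complex MeasureTheory intervalIntegral

lemma primitive_hasDerivAt {g : ℂ → ℂ} (hg : Differentiable ℂ g) (z₀ : ℂ) :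
    HasDerivAt (fun z => z * ∫ t in (0:ℝ)..1, g ((t:ℂ) * z)) (g z₀) z₀ := by
  have hgc : Continuous g := hg.continuous
  have hg2 : ContDiff ℂ 2 g := hg.contDiff
  have hg'c : Continuous (deriv g) := hg2.continuous_deriv (by norm_num)
  obtain ⟨M, hM⟩ := (isCompact_closedBall (0:ℂ) (‖z₀‖ + 1)).exists_bound_of_continuousOn
    hg'c.continuousOn
  have hM0 : 0 ≤ M := (norm_nonneg _).trans (hM 0 (by simp [Metric.mem_closedBall]; positivity))
  have hcont1 : Continuous fun t : ℝ => g ((t:ℂ) * z₀) :=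
    hgc.comp (continuous_ofReal.mul continuous_const)
  have hcont2 : Continuous fun t : ℝ => deriv g ((t:ℂ) * z₀) * (t:ℂ) :=
    (hg'c.comp (continuous_ofReal.mul continuous_const)).mul continuous_ofReal
  have htnorm : ∀ t : ℝ, t ∈ Set.uIoc (0:ℝ) 1 → ‖(t:ℂ)‖ ≤ 1 := by
    intro t ht
    have ht' : t ∈ Set.Ioc (0:ℝ) 1 := by simpa [Set.uIoc_of_le] using ht
    rw [Complex.norm_real, Real.norm_eq_abs, abs_le]; constructor <;> linarith [ht'.1, ht'.2]
  have key := intervalIntegral.hasDerivAt_integral_of_dominated_loc_of_deriv_le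
    (F := fun x t => g ((t:ℂ) * x)) (F' := fun x t => deriv g ((t:ℂ) * x) * (t:ℂ))
    (x₀ := z₀) (s := Metric.ball z₀ 1) (a := 0) (b := 1) (μ := volume) (bound := fun _ => M)
    (Metric.ball_mem_nhds z₀ one_pos)
    (Filter.Eventually.of_forall fun x =>
      ((hgc.comp (continuous_ofReal.mul continuous_const)).aestronglyMeasurable))
    (hcont1.intervalIntegrable 0 1)
    (hcont2.aestronglyMeasurable)
    ?_ (intervalIntegrable_const) ?_
  · obtain ⟨hint, hder⟩ := key
    have hmul : HasDerivAt (fun z => z * ∫ t in (0:ℝ)..1, g ((t:ℂ) * z))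
        (1 * (∫ t in (0:ℝ)..1, g ((t:ℂ) * z₀)) +
          z₀ * ∫ t in (0:ℝ)..1, deriv g ((t:ℂ) * z₀) * (t:ℂ)) z₀ :=
      (hasDerivAt_id z₀).mul hder
    convert hmul using 1
    have hftc : ∀ t ∈ Set.uIcc (0:ℝ) 1, HasDerivAt (fun s : ℝ => (s:ℂ) * g ((s:ℂ) * z₀))
        (g ((t:ℂ) * z₀) + (t:ℂ) * (deriv g ((t:ℂ) * z₀) * z₀)) t := by
      intro t _
      have h1 : HasDerivAt (fun s : ℝ => (s:ℂ)) 1 t := by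
        simpa using (hasDerivAt_id t).ofReal_comp
      have hc : HasDerivAt (fun s : ℝ => (s:ℂ) * z₀) z₀ t := by
        simpa using h1.mul_const z₀
      have h2 : HasDerivAt (fun s : ℝ => g ((s:ℂ) * z₀)) (deriv g ((t:ℂ) * z₀) * z₀) t := by
        simpa [mul_comm, Function.comp_def] using (hg ((t:ℂ) * z₀)).hasDerivAt.scomp t hc
      simpa [Pi.mul_def] using h1.mul h2
    have hcont3 : Continuous fun t : ℝ => (t:ℂ) * (deriv g ((t:ℂ) * z₀) * z₀) :=
      continuous_ofReal.mul ((hg'c.comp (continuous_ofReal.mul continuous_const)).mul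
        continuous_const)
    have hint2 : IntervalIntegrable
        (fun t : ℝ => g ((t:ℂ) * z₀) + (t:ℂ) * (deriv g ((t:ℂ) * z₀) * z₀)) volume 0 1 :=
      (hcont1.add hcont3).intervalIntegrable 0 1
    have heq := intervalIntegral.integral_eq_sub_of_hasDerivAt hftc hint2
    simp only [Complex.ofReal_one, Complex.ofReal_zero, one_mul, zero_mul] at heq
    rw [intervalIntegral.integral_add (hcont1.intervalIntegrable 0 1)
      (hcont3.intervalIntegrable 0 1)] at heq
    have h3 : (∫ t in (0:ℝ)..1, (t:ℂ) * (deriv g ((t:ℂ) * z₀) * z₀)) =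
        z₀ * ∫ t in (0:ℝ)..1, deriv g ((t:ℂ) * z₀) * (t:ℂ) := by
      rw [← intervalIntegral.integral_const_mul]
      apply intervalIntegral.integral_congr
      intro t _
      ring
    rw [h3] at heq
    rw [one_mul]
    linear_combination -heq
  · -- bound
    filter_upwards with t
    intro ht x hx
    have hx1 : ‖x‖ ≤ ‖z₀‖ + 1 := by
      have h := mem_ball_iff_norm.mp hx
      linarith [(norm_sub_norm_le x z₀).trans h.le]
    have hx' : ‖(t:ℂ) * x‖ ≤ ‖z₀‖ + 1 := by
      rw [norm_mul]
      calc ‖(t:ℂ)‖ * ‖x‖ ≤ 1 * (‖z₀‖ + 1) :=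
            mul_le_mul (htnorm t ht) hx1 (norm_nonneg _) one_pos.le
        _ = ‖z₀‖ + 1 := one_mul _
    calc ‖deriv g ((t:ℂ) * x) * (t:ℂ)‖ = ‖deriv g ((t:ℂ) * x)‖ * ‖(t:ℂ)‖ := norm_mul _ _
      _ ≤ M * 1 := mul_le_mul
          (hM _ (by simpa [Metric.mem_closedBall, dist_zero_right] using hx'))
          (htnorm t ht) (norm_nonneg _) hM0
      _ = M := mul_one M
  · -- differentiability in x
    filter_upwards with t
    intro ht x hx
    have h1 : HasDerivAt (fun x : ℂ => (t:ℂ) * x) (t:ℂ) x := by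
      simpa using (hasDerivAt_id x).const_mul (t:ℂ)
    have h2 := HasDerivAt.comp x (hg ((t:ℂ) * x)).hasDerivAt h1
    simpa [Function.comp_def] using h2
lemma clm_eq_on_basis' {L L' : ℂ →L[ℝ] ℝ} (h1 : L 1 = L' 1) (hI : L Complex.I = L' Complex.I) :
    L = L' := by
  ext w
  have hw : w = w.re • (1 : ℂ) + w.im • Complex.I := by simp [Complex.real_smul]
  rw [hw, map_add, map_add, _root_.map_smul, _root_.map_smul, _root_.map_smul, _root_.map_smul, h1, hI]

lemma re_primitive_eq {u : ℂ → ℝ} (hu : ContDiff ℝ 2 u) {F : ℂ → ℂ}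
    (hF : ∀ z, HasDerivAt F (gfun u z) z) (hF0 : F 0 = (u 0 : ℂ)) :
    ∀ z, u z = (F z).re := by
  have hphi : ∀ z : ℂ, HasFDerivAt (fun w => u w - (F w).re) (0 : ℂ →L[ℝ] ℝ) z := by
    intro z
    have hu' : HasFDerivAt u (fderiv ℝ u z) z :=
      (hu.differentiable (by norm_num) z).hasFDerivAt
    have hFre : HasFDerivAt (fun w => (F w).re)
        (Complex.reCLM.comp (((1 : ℂ →L[ℂ] ℂ).smulRight (gfun u z)).restrictScalars ℝ)) z :=
      Complex.reCLM.hasFDerivAt.comp z ((hF z).hasFDerivAt.restrictScalars ℝ)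
    have := hu'.sub hFre
    refine this.congr_fderiv (Eq.symm ?_)
    apply Eq.symm
    rw [sub_eq_zero]
    apply clm_eq_on_basis'
    · simp [gfun]
    · simp [gfun]
  have hdiff : Differentiable ℝ (fun w => u w - (F w).re) := fun z => (hphi z).differentiableAt
  have hfz : ∀ z, fderiv ℝ (fun w => u w - (F w).re) z = 0 := fun z => (hphi z).fderiv
  intro z
  have := is_const_of_fderiv_eq_zero hdiff hfz z 0
  have h0 : u 0 - (F 0).re = 0 := by rw [hF0]; simp
  rw [h0] at this
  linarith
open Complex MeasureTheory intervalIntegral Metric Filter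

lemma intervalIntegral_conj {f : ℝ → ℂ} {a b : ℝ} :
    ∫ t in a..b, (starRingEnd ℂ) (f t) = (starRingEnd ℂ) (∫ t in a..b, f t) := by
  simp [intervalIntegral, ← integral_conj, map_sub]

-- For n ≥ 1, the circle integral of conj F / z^(n+1) over C(0,R) vanishes for entire F.
lemma conj_circleIntegral_zero {F : ℂ → ℂ} (hF : Differentiable ℂ F) {R : ℝ} (hR : 0 < R)
    {m : ℕ} :
    (∮ z in C(0, R), z⁻¹ ^ (m+1) * (z⁻¹ * (starRingEnd ℂ) (F z))) = 0 := by
  have hzero : (∮ z in C(0, R), z ^ m * F z) = 0 := by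
    apply Complex.circleIntegral_eq_zero_of_differentiable_on_off_countable hR.le
      Set.countable_empty
    · exact ((continuous_pow m).mul hF.continuous).continuousOn
    · exact fun z _ => ((differentiableAt_pow m).mul (hF z))
  have hptwise : ∀ θ : ℝ,
      deriv (circleMap 0 R) θ • ((circleMap 0 R θ)⁻¹ ^ (m+1) *
        ((circleMap 0 R θ)⁻¹ * (starRingEnd ℂ) (F (circleMap 0 R θ))))
      = (starRingEnd ℂ) ((-((R:ℂ) ^ (2*(m+1)))⁻¹) *
          (deriv (circleMap 0 R) θ • (circleMap 0 R θ ^ m * F (circleMap 0 R θ)))) := by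
    intro θ
    have hRne : (R:ℂ) ≠ 0 := Complex.ofReal_ne_zero.mpr hR.ne'
    have he : Complex.exp (θ * Complex.I) ≠ 0 := Complex.exp_ne_zero _
    have hconj_e : (starRingEnd ℂ) (Complex.exp (θ * Complex.I)) =
        (Complex.exp (θ * Complex.I))⁻¹ := by
      rw [← Complex.exp_conj]
      rw [← Complex.exp_neg]
      congr 1
      simp [Complex.conj_ofReal]
    have hw : circleMap 0 R θ = (R:ℂ) * Complex.exp (θ * Complex.I) := circleMap_zero R θ
    rw [deriv_circleMap]
    simp only [smul_eq_mul, map_mul, map_neg, map_inv₀, map_pow, Complex.conj_ofReal,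
      Complex.conj_I, hconj_e, hw]
    field_simp [he, hRne]
    linear_combination (((R:ℂ) * (R:ℂ) ^ m * (cexp (↑θ * I))⁻¹ ^ m * (starRingEnd ℂ) (F (↑R * cexp (↑θ * I))) * ((R:ℂ) * (R:ℂ)⁻¹) * ((R:ℂ) ^ m * ((R:ℂ) ^ m)⁻¹)) * mul_inv_cancel₀ he
      + ((R:ℂ) * (R:ℂ) ^ m * (cexp (↑θ * I))⁻¹ ^ m * (starRingEnd ℂ) (F (↑R * cexp (↑θ * I))) * ((R:ℂ) ^ m * ((R:ℂ) ^ m)⁻¹)) * mul_inv_cancel₀ hRne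
      + ((R:ℂ) * (R:ℂ) ^ m * (cexp (↑θ * I))⁻¹ ^ m * (starRingEnd ℂ) (F (↑R * cexp (↑θ * I)))) * mul_inv_cancel₀ (pow_ne_zero m hRne))
  calc (∮ z in C(0, R), z⁻¹ ^ (m+1) * (z⁻¹ * (starRingEnd ℂ) (F z)))
      = ∫ θ in (0:ℝ)..2*Real.pi, (starRingEnd ℂ) ((-((R:ℂ) ^ (2*(m+1)))⁻¹) *
          (deriv (circleMap 0 R) θ • (circleMap 0 R θ ^ m * F (circleMap 0 R θ)))) :=
        intervalIntegral.integral_congr (fun θ _ => hptwise θ)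
    _ = (starRingEnd ℂ) ((-((R:ℂ) ^ (2*(m+1)))⁻¹) *
          ∫ θ in (0:ℝ)..2*Real.pi, deriv (circleMap 0 R) θ •
            (circleMap 0 R θ ^ m * F (circleMap 0 R θ))) := by
        rw [_root_.intervalIntegral_conj, intervalIntegral.integral_const_mul]
    _ = 0 := by
        have : (∫ θ in (0:ℝ)..2*Real.pi, deriv (circleMap 0 R) θ •
            (circleMap 0 R θ ^ m * F (circleMap 0 R θ))) = ∮ z in C(0, R), z ^ m * F z := rfl
        rw [this, hzero]
        simp

lemma cauchy_coeff_vanish {F : ℂ → ℂ} (hF : Differentiable ℂ F) {C d : ℝ} (hC : 0 < C)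
    (hd : 0 ≤ d) (hgrowth : ∀ z : ℂ, |(F z).re| ≤ C * (1 + ‖z‖) ^ d) {n : ℕ}
    (hn : d < n) :
    (cauchyPowerSeries F 0 1).coeff n = 0 := by
  have hn0 : n ≠ 0 := by rintro rfl; simp at hn; linarith
  obtain ⟨m, rfl⟩ : ∃ m, n = m + 1 := ⟨n - 1, by omega⟩
  set n := m + 1 with hnn
  have key : ∀ R : ℝ, 1 ≤ R → ‖(cauchyPowerSeries F 0 1).coeff n‖ ≤ 2*C*(1+R)^d / R^n := by
    intro R hR1
    have hR0 : (0:ℝ) < R := lt_of_lt_of_le one_pos hR1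
    have h1 := hF.hasFPowerSeriesOnBall 0 (R := 1) one_pos
    have h2 := hF.hasFPowerSeriesOnBall 0 (R := R.toNNReal) (by simp [hR0])
    have heq : cauchyPowerSeries F 0 ((R.toNNReal : ℝ)) = cauchyPowerSeries F 0 1 :=
      h2.hasFPowerSeriesAt.eq_formalMultilinearSeries h1.hasFPowerSeriesAt
    rw [Real.coe_toNNReal _ hR0.le] at heq
    rw [← heq]
    -- coefficient as circle integral
    have hcoeff : (cauchyPowerSeries F 0 R).coeff n =
        (2 * Real.pi * Complex.I)⁻¹ • ∮ z in C(0, R), z⁻¹ ^ n * (z⁻¹ * F z) := by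
      simp [FormalMultilinearSeries.coeff, cauchyPowerSeries,
        ContinuousMultilinearMap.mkPiRing_apply, smul_eq_mul]
    have hzne : ∀ z ∈ sphere (0:ℂ) R, z ≠ 0 := by
      intro z hz h0
      rw [mem_sphere, dist_zero_right, h0] at hz
      simp at hz
      exact hR0.ne' hz.symm
    have hc1 : ContinuousOn (fun z : ℂ => z⁻¹ ^ n * (z⁻¹ * F z)) (sphere 0 R) :=
      ((continuousOn_id.inv₀ hzne).pow n).mul
        ((continuousOn_id.inv₀ hzne).mul hF.continuous.continuousOn)
    have hc2 : ContinuousOn (fun z : ℂ => z⁻¹ ^ n * (z⁻¹ * (starRingEnd ℂ) (F z)))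
        (sphere 0 R) :=
      ((continuousOn_id.inv₀ hzne).pow n).mul
        ((continuousOn_id.inv₀ hzne).mul
          ((continuous_star.comp hF.continuous).continuousOn))
    have hi1 : CircleIntegrable (fun z : ℂ => z⁻¹ ^ n * (z⁻¹ * F z)) 0 R :=
      ContinuousOn.circleIntegrable hR0.le hc1
    have hi2 : CircleIntegrable (fun z : ℂ => z⁻¹ ^ n * (z⁻¹ * (starRingEnd ℂ) (F z))) 0 R :=
      ContinuousOn.circleIntegrable hR0.le hc2
    have hzero := conj_circleIntegral_zero hF hR0 (m := m)
    have hc3 : ContinuousOn (fun z : ℂ => z⁻¹ ^ n * (z⁻¹ * (((2 * (F z).re : ℝ) : ℂ))))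
        (sphere 0 R) :=
      ((continuousOn_id.inv₀ hzne).pow n).mul ((continuousOn_id.inv₀ hzne).mul
        ((Complex.continuous_ofReal.comp
          (continuous_const.mul (Complex.continuous_re.comp hF.continuous))).continuousOn))
    have hi3 : CircleIntegrable (fun z : ℂ => z⁻¹ ^ n * (z⁻¹ * (((2 * (F z).re : ℝ) : ℂ)))) 0 R :=
      ContinuousOn.circleIntegrable hR0.le hc3
    have hsplit : (∮ z in C(0, R), z⁻¹ ^ n * (z⁻¹ * F z)) =
        ∮ z in C(0, R), z⁻¹ ^ n * (z⁻¹ * (((2 * (F z).re : ℝ) : ℂ))) := by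
      have h4 := circleIntegral.integral_sub hi3 hi2
      rw [hzero, sub_zero] at h4
      rw [← h4]
      apply circleIntegral.integral_congr hR0.le
      intro z hz
      simp only []
      rw [← Complex.add_conj]
      ring
    rw [hcoeff, hsplit]
    rw [norm_smul]
    have hnorm1 : ‖(2 * (Real.pi:ℂ) * Complex.I)⁻¹‖ = (2 * Real.pi)⁻¹ := by
      rw [norm_inv]
      simp [Real.pi_nonneg]
    rw [hnorm1]
    have hbound : ∀ z ∈ sphere (0:ℂ) R,
        ‖z⁻¹ ^ n * (z⁻¹ * (((2 * (F z).re : ℝ) : ℂ)))‖ ≤ R⁻¹^n * (R⁻¹ * (2*C*(1+R)^d)) := by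
      intro z hz
      rw [mem_sphere, dist_zero_right] at hz
      simp only [norm_mul, norm_pow, norm_inv, hz]
      have h3 : ‖(((2 * (F z).re : ℝ) : ℂ))‖ ≤ 2*C*(1+R)^d := by
        rw [Complex.norm_real, Real.norm_eq_abs, abs_mul]
        have := hgrowth z
        rw [hz] at this
        calc |2| * |(F z).re| ≤ 2 * (C * (1+R)^d) := by
              rw [_root_.abs_two]
              exact mul_le_mul_of_nonneg_left this two_pos.le
          _ = 2*C*(1+R)^d := by ring
      gcongr
    have := circleIntegral.norm_integral_le_of_norm_le_const hR0.le hbound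
    calc (2 * Real.pi)⁻¹ * ‖∮ z in C(0, R), z⁻¹ ^ n * (z⁻¹ * (((2 * (F z).re : ℝ) : ℂ)))‖
        ≤ (2 * Real.pi)⁻¹ * (2 * Real.pi * R * (R⁻¹^n * (R⁻¹ * (2*C*(1+R)^d)))) :=
          mul_le_mul_of_nonneg_left this (by positivity)
      _ = 2*C*(1+R)^d / R^n := by
          field_simp
          ring
          rw [← mul_pow, mul_inv_cancel₀ hR0.ne', one_pow]
  -- limit as R → ∞
  have hmono : ∀ R : ℝ, 1 ≤ R → 2*C*(1+R)^d / R^n ≤ (2*C*2^d) * R ^ (d - (n:ℝ)) := by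
    intro R hR1
    have hR0 : (0:ℝ) < R := lt_of_lt_of_le one_pos hR1
    have h1 : (1+R)^d ≤ 2^d * R^d := by
      rw [← Real.mul_rpow (by norm_num) hR0.le]
      exact Real.rpow_le_rpow (by linarith) (by linarith) hd
    have h2 : R ^ (d - (n:ℝ)) = R^d / R^(n:ℕ) := by
      rw [Real.rpow_sub hR0, Real.rpow_natCast]
    rw [h2, show 2*C*2^d * (R^d / R^(n:ℕ)) = (2*C*(2^d * R^d))/R^(n:ℕ) from by ring]
    gcongr
  have htend : Filter.Tendsto (fun R : ℝ => (2*C*2^d) * R ^ (d - (n:ℝ))) atTop (nhds 0) := by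
    have h := tendsto_rpow_neg_atTop (y := (n:ℝ) - d) (by linarith)
    have h2 : (fun R : ℝ => R ^ (-((n:ℝ) - d))) = fun R : ℝ => R ^ (d - (n:ℝ)) := by
      funext R; rw [neg_sub]
    rw [h2] at h
    simpa using h.const_mul (2*C*2^d)
  have hle : ‖(cauchyPowerSeries F 0 1).coeff n‖ ≤ 0 := by
    apply ge_of_tendsto htend
    filter_upwards [eventually_ge_atTop (1:ℝ)] with R hR
    exact (key R hR).trans (hmono R hR)
  simpa using le_antisymm hle (norm_nonneg _)
open Complex Finset

lemma F_eq_sum {F : ℂ → ℂ} (hF : Differentiable ℂ F) {M : ℕ}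
    (hvan : ∀ n, M < n → (cauchyPowerSeries F 0 1).coeff n = 0) (z : ℂ) :
    F z = ∑ n ∈ Finset.range (M+1), (cauchyPowerSeries F 0 1).coeff n * z^n := by
  have h1 := hF.hasFPowerSeriesOnBall 0 (R := 1) one_pos
  have hz : z ∈ EMetric.ball (0:ℂ) ⊤ := EMetric.mem_ball.mpr (edist_lt_top z 0)
  have hsum := h1.hasSum hz
  rw [zero_add] at hsum
  simp only [NNReal.coe_one] at hsum
  have hterm : (fun n => ((cauchyPowerSeries F 0 1) n fun _ => z)) =
      fun n => (cauchyPowerSeries F 0 1).coeff n * z^n := by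
    funext n
    rw [FormalMultilinearSeries.apply_eq_pow_smul_coeff, smul_eq_mul]
    ring
  rw [hterm] at hsum
  refine hsum.unique (hasSum_sum_of_ne_finset_zero fun n hn => ?_)
  rw [hvan n (by simpa using hn)]
  ring

lemma exists_poly (M : ℕ) (a : ℕ → ℂ) :
    ∃ p : MvPolynomial (Fin 2) ℝ, p.totalDegree ≤ M ∧ ∀ x y : ℝ,
      MvPolynomial.eval ![x, y] p
        = (∑ n ∈ Finset.range (M+1), a n * ((x:ℂ) + (y:ℂ) * Complex.I)^n).re := by
  classical
  set B : MvPolynomial (Fin 2) ℂ :=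
    MvPolynomial.X 0 + MvPolynomial.X 1 * MvPolynomial.C Complex.I with hB
  set q : MvPolynomial (Fin 2) ℂ :=
    ∑ n ∈ Finset.range (M+1), MvPolynomial.C (a n) * B ^ n with hq
  have hq_deg : q.totalDegree ≤ M := by
    apply MvPolynomial.totalDegree_finsetSum_le
    intro n hn
    calc (MvPolynomial.C (a n) * B ^ n).totalDegree
        ≤ (MvPolynomial.C (a n)).totalDegree + (B ^ n).totalDegree :=
          MvPolynomial.totalDegree_mul _ _
      _ ≤ 0 + n * B.totalDegree := by
          rw [MvPolynomial.totalDegree_C]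
          exact add_le_add le_rfl (MvPolynomial.totalDegree_pow _ _)
      _ ≤ n * 1 := by
          rw [zero_add]
          apply Nat.mul_le_mul le_rfl
          apply le_trans (MvPolynomial.totalDegree_add _ _)
          simp [MvPolynomial.totalDegree_X]
          apply le_trans (MvPolynomial.totalDegree_mul _ _)
          simp [MvPolynomial.totalDegree_X, MvPolynomial.totalDegree_C]
      _ ≤ M := by rw [mul_one]; exact Nat.lt_succ_iff.mp (Finset.mem_range.mp hn)
  set p : MvPolynomial (Fin 2) ℝ :=
    ∑ s ∈ q.support, MvPolynomial.monomial s ((MvPolynomial.coeff s q).re) with hp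
  refine ⟨p, ?_, ?_⟩
  · apply MvPolynomial.totalDegree_finsetSum_le
    intro s hs
    by_cases hc : (MvPolynomial.coeff s q).re = 0
    · simp [hc]
    · rw [MvPolynomial.totalDegree_monomial s hc]
      exact le_trans (MvPolynomial.le_totalDegree hs) hq_deg
  · intro x y
    have hre : ∀ v : Fin 2 → ℝ, MvPolynomial.eval v p
        = (MvPolynomial.eval (fun i => ((v i : ℝ) : ℂ)) q).re := by
      intro v
      rw [hp, map_sum, MvPolynomial.eval_eq', Complex.re_sum]
      apply Finset.sum_congr rfl
      intro s hs
      rw [MvPolynomial.eval_monomial]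
      have hprod : (∏ i, ((v i : ℂ)) ^ s i) = ((∏ i, v i ^ s i : ℝ) : ℂ) := by
        push_cast; ring
      rw [hprod]
      simp only [Complex.mul_re, Complex.ofReal_re, Complex.ofReal_im, mul_zero, sub_zero]
      congr 1
      rw [Finsupp.prod_pow]
    have heval : MvPolynomial.eval (fun i => ((![x,y] i : ℝ) : ℂ)) q
        = ∑ n ∈ Finset.range (M+1), a n * ((x:ℂ) + (y:ℂ) * Complex.I)^n := by
      rw [hq, map_sum]
      apply Finset.sum_congr rfl
      intro n _
      rw [map_mul, map_pow, MvPolynomial.eval_C, hB]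
      simp [MvPolynomial.eval_X, MvPolynomial.eval_C]
    rw [hre ![x,y], heval]

theorem harmonic_polynomial_growth (u : ℂ → ℝ) (hu : ContDiff ℝ 2 u)
    (hharm : ∀ z : ℂ,
      fderiv ℝ (fun w => fderiv ℝ u w 1) z 1
        + fderiv ℝ (fun w => fderiv ℝ u w Complex.I) z Complex.I = 0)
    (C : ℝ) (hC : 0 < C) (d : ℝ) (hd : 0 ≤ d)
    (hgrowth : ∀ z : ℂ, |u z| ≤ C * (1 + ‖z‖) ^ d) :
    ∃ p : MvPolynomial (Fin 2) ℝ, p.totalDegree ≤ ⌊d⌋₊ ∧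
      ∀ z : ℂ, u z = MvPolynomial.eval ![z.re, z.im] p := by
  have hg := gfun_differentiable hu hharm
  set F : ℂ → ℂ := fun z => (u 0 : ℂ) + z * ∫ t in (0:ℝ)..1, gfun u ((t:ℂ) * z) with hFdef
  have hFd : ∀ z, HasDerivAt F (gfun u z) z :=
    fun z => (primitive_hasDerivAt hg z).const_add ((u 0 : ℂ))
  have hFdiff : Differentiable ℂ F := fun z => (hFd z).differentiableAt
  have hF0 : F 0 = (u 0 : ℂ) := by simp [hFdef]
  have hre : ∀ z, u z = (F z).re := re_primitive_eq hu hFd hF0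
  have hvan : ∀ n, ⌊d⌋₊ < n → (cauchyPowerSeries F 0 1).coeff n = 0 := by
    intro n hn
    apply cauchy_coeff_vanish hFdiff hC hd
    · intro z
      rw [← hre z]
      exact hgrowth z
    · calc d < (⌊d⌋₊ + 1 : ℕ) := by exact_mod_cast Nat.lt_floor_add_one d
        _ ≤ (n : ℝ) := by exact_mod_cast hn
  obtain ⟨p, hdeg, heval⟩ := exists_poly ⌊d⌋₊ (fun n => (cauchyPowerSeries F 0 1).coeff n)
  refine ⟨p, hdeg, fun z => ?_⟩
  rw [heval z.re z.im, Complex.re_add_im z, hre z, F_eq_sum hFdiff hvan z]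
end

section
/- If g is an entire nonvanishing function and there exist constants C, c > 0 and a real number ρ > 0 with |g(z)| ≤ C·exp(C|z|^ρ) for all z ∈ ℂ, then g = exp(P) for some polynomial P of degree at most ⌊ρ⌋. -/
open Complex Metric Set Filter Nat intervalIntegral
open scoped NNReal



/-- Every entire function has a primitive. -/
lemma entire_exists_primitive {f : ℂ → ℂ} (hf : Differentiable ℂ f) :
    ∃ H : ℂ → ℂ, ∀ z, HasDerivAt H (f z) z := by
  have hf' : Differentiable ℂ (deriv f) := by
    have h1 := (hf.differentiableOn.analyticOnNhd isOpen_univ).deriv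
    exact fun z => ((h1 z trivial).differentiableAt)
  have hcf : Continuous f := hf.continuous
  have hcf' : Continuous (deriv f) := hf'.continuous
  refine ⟨fun z => ∫ t in (0:ℝ)..1, z * f (t * z), fun z₀ => ?_⟩
  set F' : ℂ → ℝ → ℂ := fun x t => f (t * x) + x * (t * deriv f (t * x)) with hF'
  obtain ⟨M₁, hM₁⟩ := (isCompact_closedBall (0:ℂ) (‖z₀‖ + 1)).exists_bound_of_continuousOn
    hcf.continuousOn
  obtain ⟨M₂, hM₂⟩ := (isCompact_closedBall (0:ℂ) (‖z₀‖ + 1)).exists_bound_of_continuousOn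
    hcf'.continuousOn
  have hxnorm : ∀ x ∈ ball z₀ 1, ‖x‖ ≤ ‖z₀‖ + 1 := by
    intro x hx
    calc ‖x‖ ≤ ‖z₀‖ + ‖x - z₀‖ := by simpa [dist_eq_norm] using (norm_le_insert' x z₀)
      _ ≤ ‖z₀‖ + 1 := by linarith [(mem_ball_iff_norm.mp hx).le]
  have hmem : ∀ t : ℝ, t ∈ Set.uIoc (0:ℝ) 1 → ∀ x ∈ ball z₀ 1,
      (t : ℂ) * x ∈ closedBall (0:ℂ) (‖z₀‖ + 1) := by
    intro t ht x hx
    rw [uIoc_of_le zero_le_one] at ht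
    rw [mem_closedBall, _root_.dist_zero_right]
    have h1 : ‖(t:ℂ)‖ ≤ 1 := by
      rw [Complex.norm_real, Real.norm_eq_abs, _root_.abs_of_nonneg ht.1.le]; exact ht.2
    calc ‖(t:ℂ) * x‖ = ‖(t:ℂ)‖ * ‖x‖ := norm_mul _ _
      _ ≤ 1 * (‖z₀‖ + 1) := mul_le_mul h1 (hxnorm x hx) (norm_nonneg _) zero_le_one
      _ = ‖z₀‖ + 1 := one_mul _
  have hcont : ∀ x : ℂ, Continuous (fun t : ℝ => x * f (t * x)) := by
    intro x; exact continuous_const.mul (hcf.comp (Complex.continuous_ofReal.mul continuous_const))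
  have hcont' : Continuous (F' z₀) := by
    rw [hF']
    exact (hcf.comp (Complex.continuous_ofReal.mul continuous_const)).add
      (continuous_const.mul ((Complex.continuous_ofReal.mul
        (hcf'.comp (Complex.continuous_ofReal.mul continuous_const)))))
  have key := intervalIntegral.hasDerivAt_integral_of_dominated_loc_of_deriv_le
    (F := fun x t => x * f (t * x)) (F' := F') (x₀ := z₀) (a := 0) (b := 1)
    (bound := fun _ => M₁ + (‖z₀‖ + 1) * max M₂ 0) (μ := MeasureTheory.volume)
    (ball_mem_nhds z₀ one_pos)
    (Filter.Eventually.of_forall fun x => (hcont x).aestronglyMeasurable)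
    ((hcont z₀).intervalIntegrable _ _)
    hcont'.aestronglyMeasurable
    (Filter.Eventually.of_forall ?_)
    (intervalIntegrable_const)
    (Filter.Eventually.of_forall ?_)
  · obtain ⟨-, hd⟩ := key
    have heq : ∀ t ∈ uIcc (0:ℝ) 1,
        HasDerivAt (fun s : ℝ => (s : ℂ) * f (s * z₀)) (F' z₀ t) t := by
      intro t _
      have hb : HasDerivAt (fun w : ℂ => f (w * z₀)) (deriv f ((t:ℂ)*z₀) * z₀) (t:ℂ) := by
        have := ((hf ((t:ℂ) * z₀)).hasDerivAt).comp (t:ℂ)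
          ((hasDerivAt_id (t:ℂ)).mul_const z₀)
        exact this.congr_deriv (by ring)
      have h1 : HasDerivAt (fun w : ℂ => w * f (w * z₀))
          (1 * f ((t:ℂ) * z₀) + (t:ℂ) * (deriv f ((t:ℂ)*z₀) * z₀)) (t:ℂ) :=
        (hasDerivAt_id (t:ℂ)).mul hb
      have h2 := h1.comp_ofReal
      convert h2 using 1
      rw [hF']; ring
    have hival := intervalIntegral.integral_eq_sub_of_hasDerivAt heq
      (hcont'.intervalIntegrable _ _)
    rw [hival] at hd
    simpa using hd
  · intro t ht x hx
    have h1 := hM₁ _ (hmem t ht x hx)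
    have h2 := hM₂ _ (hmem t ht x hx)
    rw [uIoc_of_le zero_le_one] at ht
    have ht1 : ‖(t:ℂ)‖ ≤ 1 := by
      rw [Complex.norm_real, Real.norm_eq_abs, _root_.abs_of_nonneg ht.1.le]; exact ht.2
    calc ‖F' x t‖ ≤ ‖f ((t:ℂ) * x)‖ + ‖x * ((t:ℂ) * deriv f ((t:ℂ) * x))‖ := norm_add_le _ _
      _ ≤ M₁ + (‖z₀‖ + 1) * max M₂ 0 := by
          refine add_le_add h1 ?_
          rw [norm_mul, norm_mul]
          calc ‖x‖ * (‖(t:ℂ)‖ * ‖deriv f ((t:ℂ)*x)‖) ≤ (‖z₀‖+1) * (1 * max M₂ 0) := by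
                apply mul_le_mul (hxnorm x hx) _ (by positivity) (by positivity)
                exact mul_le_mul ht1 (h2.trans (le_max_left _ _)) (norm_nonneg _) zero_le_one
            _ = (‖z₀‖+1) * max M₂ 0 := by ring
  · intro t _ x _
    have hb : HasDerivAt (fun w : ℂ => f ((t:ℂ) * w)) (deriv f ((t:ℂ)*x) * (t:ℂ)) x := by
      have hinner : HasDerivAt (fun w : ℂ => (t:ℂ) * w) (t:ℂ) x := by
        simpa using (hasDerivAt_id x).const_mul (t:ℂ)
      have hcomp := ((hf ((t:ℂ) * x)).hasDerivAt).comp x hinner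
      have : (deriv f ((t:ℂ)*x) * (t:ℂ)) = deriv f ((t:ℂ)*x) * (t:ℂ) := rfl
      exact hcomp
    have h1 : HasDerivAt (fun w : ℂ => w * f ((t:ℂ) * w))
        (1 * f ((t:ℂ) * x) + x * (deriv f ((t:ℂ)*x) * (t:ℂ))) x :=
      (hasDerivAt_id x).mul hb
    refine h1.congr_deriv ?_
    rw [hF']; ring


/-- Borel–Carathéodory-type bound. -/
lemma borel_caratheodory {Φ : ℂ → ℂ} (hφ : Differentiable ℂ Φ) (hΦ0 : Φ 0 = 0)
    {R M : ℝ} (hR : 0 < R) (hM : 0 ≤ M)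
    (hRe : ∀ z, ‖z‖ ≤ R → (Φ z).re ≤ M) :
    ∀ z, ‖z‖ ≤ R / 2 → ‖Φ z‖ ≤ 2 * (M + 1) := by
  set K : ℝ := M + 1 with hK
  have hK0 : 0 < K := by positivity
  set ψ : ℂ → ℂ := fun z => Φ z / (2 * K - Φ z) with hψ
  have hrekey : ∀ z ∈ ball (0:ℂ) R, (Φ z).re ≤ M := fun z hz =>
    hRe z (by simpa [_root_.dist_zero_right] using (mem_ball_iff_norm.mp hz).le)
  have hdenom : ∀ z ∈ ball (0:ℂ) R, 2 * (K:ℂ) - Φ z ≠ 0 := by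
    intro z hz h0
    have hre := hrekey z hz
    have h1 : (Φ z).re = 2 * K := by
      have := congrArg Complex.re h0
      simp at this
      linarith [this]
    rw [hK] at h1; linarith
  have hdiff : DifferentiableOn ℂ ψ (ball (0:ℂ) R) :=
    (hφ.differentiableOn).div ((differentiable_const _).sub hφ).differentiableOn hdenom
  have hψ0 : ψ 0 = 0 := by simp [hψ, hΦ0]
  have hmaps : MapsTo ψ (ball (0:ℂ) R) (ball (ψ 0) 1) := by
    intro z hz
    rw [hψ0, mem_ball, _root_.dist_zero_right]
    have hre := hrekey z hz
    have hlt : ‖Φ z‖ < ‖2 * (K:ℂ) - Φ z‖ := by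
      have h2 : ‖2 * (K:ℂ) - Φ z‖ ^ 2 - ‖Φ z‖ ^ 2 = 4 * K * (K - (Φ z).re) := by
        rw [Complex.sq_norm, Complex.sq_norm,
          Complex.normSq_apply, Complex.normSq_apply]
        simp [Complex.sub_re, Complex.sub_im, Complex.mul_re, Complex.mul_im]
        ring
      nlinarith [norm_nonneg (Φ z), norm_nonneg (2 * (K:ℂ) - Φ z), hre]
    rw [hψ]
    simp only [norm_div]
    rw [div_lt_one (lt_of_le_of_lt (norm_nonneg _) hlt)]
    exact hlt
  intro z hz
  have hzball : z ∈ ball (0:ℂ) R := by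
    rw [mem_ball, _root_.dist_zero_right]; linarith
  have hschwarz := Complex.dist_le_div_mul_dist_of_mapsTo_ball hdiff (hmaps.mono_right ball_subset_closedBall) hzball
  rw [hψ0, _root_.dist_zero_right, _root_.dist_zero_right] at hschwarz
  have hψle : ‖ψ z‖ ≤ 1 / 2 := by
    calc ‖ψ z‖ ≤ 1 / R * ‖z‖ := hschwarz
      _ ≤ 1 / R * (R / 2) := by
          apply mul_le_mul_of_nonneg_left hz (by positivity)
      _ = 1 / 2 := by field_simp
  have hd := hdenom z hzball
  have hrel : Φ z * (1 + ψ z) = 2 * K * ψ z := by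
    rw [hψ]; field_simp; ring
  have h1ψ : (1:ℝ)/2 ≤ ‖1 + ψ z‖ := by
    have h3 := norm_sub_le (1 + ψ z) (ψ z)
    simp only [add_sub_cancel_right, norm_one] at h3
    linarith
  have heqn : ‖Φ z‖ * ‖1 + ψ z‖ = 2 * K * ‖ψ z‖ := by
    rw [← norm_mul, hrel, norm_mul, norm_mul]
    simp [Complex.norm_real, Real.norm_eq_abs, _root_.abs_of_pos hK0]
  have hfin : ‖Φ z‖ ≤ 2 * K := by
    nlinarith [norm_nonneg (Φ z), norm_nonneg (ψ z)]
  simpa [hK] using hfin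


/-- Cauchy-estimate consequence: an entire function with growth `O((1+‖z‖)^ρ)` has vanishing
`n`-th derivative at `0` for `n > ρ`. -/
lemma iteratedDeriv_eq_zero_of_polygrowth {h : ℂ → ℂ} (hh : Differentiable ℂ h)
    {a b ρ : ℝ} (ha : 0 ≤ a) (hb : 0 ≤ b) (hρ : 0 ≤ ρ)
    (hbd : ∀ z : ℂ, ‖h z‖ ≤ a + b * (1 + ‖z‖) ^ ρ) {n : ℕ} (hn : ρ < n) :
    iteratedDeriv n h 0 = 0 := by
  set b₂ : ℝ := b * 2 ^ ρ with hb₂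
  have hb₂0 : 0 ≤ b₂ := by positivity
  have key : ∀ k : ℕ, 1 ≤ k →
      ‖iteratedDeriv n h 0‖ ≤ n ! * (a + b₂ * (k:ℝ) ^ ρ) / (k:ℝ) ^ n := by
    intro k hk
    have hk0 : (0:ℝ) < (k:ℝ) := by exact_mod_cast Nat.lt_of_lt_of_le Nat.zero_lt_one hk
    have hk1 : (1:ℝ) ≤ (k:ℝ) := by exact_mod_cast hk
    have hRpos : (0:ℝ≥0) < (k:ℝ≥0) := by exact_mod_cast Nat.lt_of_lt_of_le Nat.zero_lt_one hk
    have hps := hh.hasFPowerSeriesOnBall 0 hRpos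
    set p := cauchyPowerSeries h 0 ((k:ℝ≥0):ℝ) with hp
    have hfs := hps.factorial_smul (1:ℂ) n
    have e1 : iteratedDeriv n h 0 = iteratedFDeriv ℂ n h 0 (fun _ => 1) :=
      iteratedDeriv_eq_iteratedFDeriv
    have e2 : ‖iteratedDeriv n h 0‖ = n ! * ‖p n (fun _ => (1:ℂ))‖ := by
      rw [e1, ← hfs, nsmul_eq_mul]
      rw [norm_mul]
      simp
    have e3 : ‖p n (fun _ => (1:ℂ))‖ ≤ ‖p n‖ := by
      have := (p n).le_opNorm (fun _ => (1:ℂ))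
      simpa using this
    have e4 : ‖p n‖ ≤ ((2 * Real.pi)⁻¹ * ∫ θ : ℝ in (0)..2 * Real.pi,
        ‖h (circleMap 0 ((k:ℝ≥0):ℝ) θ)‖) * |((k:ℝ≥0):ℝ)|⁻¹ ^ n :=
      norm_cauchyPowerSeries_le h 0 _ n
    have hcoe : ((k:ℝ≥0):ℝ) = (k:ℝ) := by push_cast; ring
    rw [hcoe] at e4
    have hD : ∀ θ ∈ Icc (0:ℝ) (2 * Real.pi),
        ‖h (circleMap 0 (k:ℝ) θ)‖ ≤ a + b₂ * (k:ℝ) ^ ρ := by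
      intro θ _
      have hnorm : ‖circleMap 0 (k:ℝ) θ‖ = (k:ℝ) := by
        rw [norm_circleMap_zero, abs_of_pos hk0]
      refine (hbd _).trans ?_
      rw [hnorm]
      have h12 : (1:ℝ) + k ≤ 2 * k := by linarith
      have : ((1:ℝ) + k) ^ ρ ≤ (2 * k) ^ ρ :=
        Real.rpow_le_rpow (by positivity) h12 hρ
      have h2k : ((2:ℝ) * k) ^ ρ = 2 ^ ρ * (k:ℝ) ^ ρ :=
        Real.mul_rpow (by norm_num) hk0.le
      rw [h2k] at this
      have := mul_le_mul_of_nonneg_left this hb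
      rw [hb₂]
      nlinarith
    have hint : (∫ θ : ℝ in (0)..2 * Real.pi, ‖h (circleMap 0 (k:ℝ) θ)‖)
        ≤ 2 * Real.pi * (a + b₂ * (k:ℝ) ^ ρ) := by
      have hconst : (∫ _ : ℝ in (0)..2 * Real.pi, (a + b₂ * (k:ℝ) ^ ρ))
          = 2 * Real.pi * (a + b₂ * (k:ℝ) ^ ρ) := by
        simp [intervalIntegral.integral_const]; ring
      rw [← hconst]
      apply intervalIntegral.integral_mono_on Real.two_pi_pos.le
      · exact ((hh.continuous.comp (continuous_circleMap 0 (k:ℝ))).norm).intervalIntegrable _ _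
      · exact intervalIntegrable_const
      · exact hD
    have habs : |(k:ℝ)|⁻¹ ^ n = ((k:ℝ) ^ n)⁻¹ := by
      rw [abs_of_pos hk0, inv_pow]
    calc ‖iteratedDeriv n h 0‖ = n ! * ‖p n (fun _ => (1:ℂ))‖ := e2
      _ ≤ n ! * ‖p n‖ := by
          exact mul_le_mul_of_nonneg_left e3 (by positivity)
      _ ≤ n ! * (((2 * Real.pi)⁻¹ * ∫ θ : ℝ in (0)..2 * Real.pi,
            ‖h (circleMap 0 (k:ℝ) θ)‖) * |(k:ℝ)|⁻¹ ^ n) := by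
          exact mul_le_mul_of_nonneg_left e4 (by positivity)
      _ ≤ n ! * (((2 * Real.pi)⁻¹ * (2 * Real.pi * (a + b₂ * (k:ℝ) ^ ρ))) * |(k:ℝ)|⁻¹ ^ n) := by
          apply mul_le_mul_of_nonneg_left _ (by positivity)
          apply mul_le_mul_of_nonneg_right _ (by positivity)
          exact mul_le_mul_of_nonneg_left hint (by positivity)
      _ = n ! * (a + b₂ * (k:ℝ) ^ ρ) / (k:ℝ) ^ n := by
          rw [habs]
          have hπ : (2 * Real.pi)⁻¹ * (2 * Real.pi * (a + b₂ * (k:ℝ) ^ ρ))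
              = a + b₂ * (k:ℝ) ^ ρ := by
            field_simp
          rw [hπ]
          field_simp
  -- now take the limit
  have hTlim : Tendsto (fun k : ℕ =>
      (n ! : ℝ) * a * (k:ℝ) ^ (-(n:ℝ)) + (n ! : ℝ) * b₂ * (k:ℝ) ^ (ρ - (n:ℝ)))
      atTop (nhds 0) := by
    have h1 : Tendsto (fun x : ℝ => x ^ (-(n:ℝ))) atTop (nhds 0) :=
      tendsto_rpow_neg_atTop (by exact_mod_cast lt_of_le_of_lt hρ hn)
    have h2 : Tendsto (fun x : ℝ => x ^ (ρ - (n:ℝ))) atTop (nhds 0) := by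
      have : (fun x : ℝ => x ^ (ρ - (n:ℝ))) = fun x : ℝ => x ^ (-((n:ℝ) - ρ)) := by
        funext x; rw [neg_sub]
      rw [this]
      exact tendsto_rpow_neg_atTop (by linarith)
    have h1' := (h1.comp tendsto_natCast_atTop_atTop).const_mul ((n ! : ℝ) * a)
    have h2' := (h2.comp tendsto_natCast_atTop_atTop).const_mul ((n ! : ℝ) * b₂)
    have := h1'.add h2'
    simpa using this
  have hev : ∀ᶠ k : ℕ in atTop, ‖iteratedDeriv n h 0‖ ≤
      (n ! : ℝ) * a * (k:ℝ) ^ (-(n:ℝ)) + (n ! : ℝ) * b₂ * (k:ℝ) ^ (ρ - (n:ℝ)) := by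
    filter_upwards [eventually_ge_atTop 1] with k hk
    have hk0 : (0:ℝ) < (k:ℝ) := by exact_mod_cast Nat.lt_of_lt_of_le Nat.zero_lt_one hk
    refine (key k hk).trans_eq ?_
    have e1 : (k:ℝ) ^ (-(n:ℝ)) = ((k:ℝ) ^ n)⁻¹ := by
      rw [Real.rpow_neg hk0.le, Real.rpow_natCast]
    have e2 : (k:ℝ) ^ (ρ - (n:ℝ)) = (k:ℝ) ^ ρ * ((k:ℝ) ^ n)⁻¹ := by
      rw [Real.rpow_sub hk0, Real.rpow_natCast, div_eq_mul_inv]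
    rw [e1, e2]
    field_simp
  have := ge_of_tendsto hTlim hev
  have hnorm : ‖iteratedDeriv n h 0‖ ≤ 0 := this
  exact norm_le_zero_iff.mp hnorm

theorem nonvanishing_entire_eq_exp_poly (g : ℂ → ℂ) (hg : Differentiable ℂ g)
    (hnz : ∀ z, g z ≠ 0) (C c ρ : ℝ) (hC : 0 < C) (hc : 0 < c) (hρ : 0 < ρ)
    (hub : ∀ z : ℂ, ‖g z‖ ≤ C * Real.exp (C * ‖z‖ ^ ρ)) :
    ∃ P : Polynomial ℂ, P.natDegree ≤ ⌊ρ⌋₊ ∧ ∀ z, g z = Complex.exp (P.eval z) := by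
  -- the logarithmic derivative
  have hg' : Differentiable ℂ (deriv g) := by
    have h1 := (hg.differentiableOn.analyticOnNhd isOpen_univ).deriv
    exact fun z => ((h1 z trivial).differentiableAt)
  set f : ℂ → ℂ := fun z => deriv g z / g z with hfdef
  have hf : Differentiable ℂ f := hg'.div hg hnz
  obtain ⟨H, hH⟩ := entire_exists_primitive hf
  set h : ℂ → ℂ := fun z => Complex.log (g 0) + (H z - H 0) with hhdef
  have hh : Differentiable ℂ h := by
    have hHd : Differentiable ℂ H := fun z => (hH z).differentiableAt
    exact (differentiable_const _).add (hHd.sub (differentiable_const _))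
  have hh' : ∀ z, HasDerivAt h (f z) z := by
    intro z
    exact (((hH z).sub_const (H 0)).const_add (Complex.log (g 0)))
  have hh0 : h 0 = Complex.log (g 0) := by simp [hhdef]
  -- g = exp ∘ h
  have hexp : ∀ z, g z = Complex.exp (h z) := by
    have hφd : Differentiable ℂ (fun z => g z * Complex.exp (-h z)) :=
      hg.mul ((hh.neg).cexp)
    have hφ' : ∀ z, deriv (fun z => g z * Complex.exp (-h z)) z = 0 := by
      intro z
      have h1 : HasDerivAt (fun z => Complex.exp (-h z))
          (Complex.exp (-h z) * (-f z)) z := by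
        have := ((hh' z).neg).cexp
        simpa using this
      have h2 : HasDerivAt (fun z => g z * Complex.exp (-h z))
          (deriv g z * Complex.exp (-h z) + g z * (Complex.exp (-h z) * (-f z))) z :=
        (hg z).hasDerivAt.mul h1
      have h3 : deriv g z * Complex.exp (-h z) + g z * (Complex.exp (-h z) * (-f z)) = 0 := by
        rw [hfdef]
        have hgz := hnz z
        field_simp
        ring
      rw [h3] at h2
      exact h2.deriv
    intro z
    have hconst := is_const_of_deriv_eq_zero hφd hφ' z 0
    have h0 : g 0 * Complex.exp (-h 0) = 1 := by
      rw [hh0, Complex.exp_neg, Complex.exp_log (hnz 0)]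
      exact mul_inv_cancel₀ (hnz 0)
    rw [h0] at hconst
    rw [Complex.exp_neg] at hconst
    exact ((mul_inv_eq_one₀ (Complex.exp_ne_zero _)).mp hconst)
  -- real part bound
  have hre : ∀ z, (h z).re ≤ Real.log C + C * ‖z‖ ^ ρ := by
    intro z
    have e1 : Real.exp (h z).re = ‖g z‖ := by
      rw [hexp z, Complex.norm_exp]
    have e2 : ‖g z‖ ≤ Real.exp (Real.log C + C * ‖z‖ ^ ρ) := by
      rw [Real.exp_add, Real.exp_log hC]
      exact hub z
    exact Real.exp_le_exp.mp (e1.trans_le e2)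
  -- global norm bound via Borel–Carathéodory
  set a : ℝ := ‖h 0‖ + 2 * (|Real.log C| + |(h 0).re| + 1) with hadef
  set b : ℝ := 2 * C * 2 ^ ρ with hbdef
  have ha0 : 0 ≤ a := by positivity
  have hb0 : 0 ≤ b := by positivity
  have hglob : ∀ z : ℂ, ‖h z‖ ≤ a + b * (1 + ‖z‖) ^ ρ := by
    intro z
    set R : ℝ := 2 * (1 + ‖z‖) with hRdef
    have hR : 0 < R := by positivity
    set M : ℝ := |Real.log C| + C * R ^ ρ + |(h 0).re| with hMdef
    have hM : 0 ≤ M := by positivity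
    have hbc := borel_caratheodory (Φ := fun w => h w - h 0)
      (hh.sub_const _) (by simp) hR hM ?_ z ?_
    · have h1 : ‖h z‖ ≤ ‖h 0‖ + ‖h z - h 0‖ := by
        simpa [dist_eq_norm] using norm_le_insert' (h z) (h 0)
      have h2 : R ^ ρ = 2 ^ ρ * (1 + ‖z‖) ^ ρ := by
        rw [hRdef]
        exact Real.mul_rpow (by norm_num) (by positivity)
      have h3 : ‖h z‖ ≤ ‖h 0‖ + 2 * (M + 1) := by linarith
      rw [hMdef, h2] at h3
      rw [hadef, hbdef]
      nlinarith
    · intro w hw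
      have h4 : (h w).re ≤ Real.log C + C * ‖w‖ ^ ρ := hre w
      have h5 : ‖w‖ ^ ρ ≤ R ^ ρ := Real.rpow_le_rpow (norm_nonneg w) hw hρ.le
      have h6 : Real.log C ≤ |Real.log C| := le_abs_self _
      have h7 : -(h 0).re ≤ |(h 0).re| := neg_le_abs _
      have h8 : C * ‖w‖ ^ ρ ≤ C * R ^ ρ := mul_le_mul_of_nonneg_left h5 hC.le
      rw [hMdef]
      simp only [Complex.sub_re]
      linarith
    · rw [hRdef]
      have := norm_nonneg z
      linarith
  -- vanishing of high Taylor coefficients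
  have hvan : ∀ n : ℕ, ⌊ρ⌋₊ < n → iteratedDeriv n h 0 = 0 := by
    intro n hn
    apply iteratedDeriv_eq_zero_of_polygrowth hh ha0 hb0 hρ.le hglob
    have h1 : ρ < (⌊ρ⌋₊ : ℝ) + 1 := Nat.lt_floor_add_one ρ
    have h2 : (⌊ρ⌋₊ : ℝ) + 1 ≤ (n : ℝ) := by exact_mod_cast hn
    linarith
  -- the polynomial
  set N : ℕ := ⌊ρ⌋₊ + 1 with hNdef
  refine ⟨∑ n ∈ Finset.range N, Polynomial.C ((n ! : ℂ)⁻¹ * iteratedDeriv n h 0)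
    * Polynomial.X ^ n, ?_, ?_⟩
  · apply Polynomial.natDegree_sum_le_of_forall_le
    intro n hn
    refine (Polynomial.natDegree_C_mul_le _ _).trans ?_
    refine (Polynomial.natDegree_X_pow_le n).trans ?_
    have := Finset.mem_range.mp hn
    omega
  · intro z
    rw [hexp z]
    congr 1
    have htay := Complex.taylorSeries_eq_of_entire' 0 z hh
    simp only [sub_zero] at htay
    have hsum : ∑' n : ℕ, (n ! : ℂ)⁻¹ * iteratedDeriv n h 0 * z ^ n
        = ∑ n ∈ Finset.range N, (n ! : ℂ)⁻¹ * iteratedDeriv n h 0 * z ^ n := by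
      apply tsum_eq_sum
      intro n hn
      have hge : N ≤ n := Nat.le_of_not_lt (fun hlt => hn (Finset.mem_range.mpr hlt))
      rw [hvan n (by omega)]
      ring
    rw [← htay, hsum]
    rw [Polynomial.eval_finset_sum]
    simp
end

section
/- Suppose W : ℂ → ℂ is entire and for every ζ with W(ζ) = 0 there exists a nonzero bounded solution of -f'' + (ζ - m x^{m-1})² f = 0. If W satisfies the growth bounds |W(ζ)| ≤ C exp(C|ζ|^{m/(m-1)}) on ℂ and |W(ζ)| ≥ δ exp(δ|ζ|^{m/(m-1)}) on ℝ with m ≥ 3, then there exists ζ ∈ ℂ \ ℝ and a nonzero bounded f with -f'' + (ζ - m x^{m-1})² f = 0. -/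
open Complex Metric Filter


lemma entire_exists_primitive_s17 {g : ℂ → ℂ} (hg : Differentiable ℂ g) (a : ℂ) :
    ∃ h : ℂ → ℂ, h 0 = a ∧ ∀ z, HasDerivAt h (g z) z := by
  set c : ℕ → ℂ := fun n => (n.factorial : ℂ)⁻¹ * iteratedDeriv n g 0 with hc
  have hsum : ∀ z : ℂ, HasSum (fun n : ℕ => c n * z ^ n) (g z) := by
    intro z
    have := Complex.hasSum_taylorSeries_of_entire hg 0 z
    refine this.congr_fun fun n => ?_
    simp [hc, smul_eq_mul]
    ring
  refine ⟨fun z => a + ∑' (n : ℕ), ((n : ℂ) + 1)⁻¹ * c n * z ^ (n + 1), ?_, ?_⟩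
  · simp
  · intro z
    set R : ℝ := ‖z‖ + 1 with hR
    have hR0 : 0 < R := by positivity
    have hbdd : ∃ M : ℝ, ∀ n, ‖c n‖ * (2 * R) ^ n ≤ M := by
      have h2 := ((hsum ((2 * R : ℝ) : ℂ)).summable.tendsto_atTop_zero).norm
      obtain ⟨M, hM⟩ := h2.bddAbove_range
      refine ⟨M, fun n => ?_⟩
      have := hM (Set.mem_range_self n)
      simpa [norm_mul, norm_pow, abs_of_pos hR0] using this
    obtain ⟨M, hM⟩ := hbdd
    have hu : Summable (fun n : ℕ => ‖c n‖ * R ^ n) := by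
      have hle : ∀ n : ℕ, ‖c n‖ * R ^ n ≤ M * (1/2) ^ n := by
        intro n
        have key : (2 * R) ^ n * (1/2) ^ n = R ^ n := by
          rw [← mul_pow]; congr 1; field_simp
        calc ‖c n‖ * R ^ n = (‖c n‖ * (2 * R) ^ n) * (1/2) ^ n := by
              rw [mul_assoc, key]
        _ ≤ M * (1/2) ^ n := mul_le_mul_of_nonneg_right (hM n) (by positivity)
      refine Summable.of_nonneg_of_le (fun n => by positivity) hle ?_
      exact (summable_geometric_of_lt_one (by norm_num) (by norm_num)).mul_left M
    have hder : HasDerivAt (fun w : ℂ => ∑' (n : ℕ), ((n : ℂ) + 1)⁻¹ * c n * w ^ (n + 1))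
        (∑' (n : ℕ), c n * z ^ n) z := by
      refine hasDerivAt_tsum_of_isPreconnected hu isOpen_ball (convex_ball (0:ℂ) R).isPreconnected
        (g := fun (n : ℕ) (w : ℂ) => ((n : ℂ) + 1)⁻¹ * c n * w ^ (n + 1))
        (g' := fun (n : ℕ) (w : ℂ) => c n * w ^ n)
        (fun n w _ => ?_) (fun n w hw => ?_) (mem_ball_self hR0) ?_
        (mem_ball_zero_iff.mpr (by rw [hR]; exact lt_add_one _))
      · have h1 : HasDerivAt (fun w : ℂ => w ^ (n + 1)) (((n:ℂ) + 1) * w ^ n) w := by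
          simpa using hasDerivAt_pow (n + 1) w
        have h2 := h1.const_mul (((n : ℂ) + 1)⁻¹ * c n)
        refine h2.congr_deriv ?_
        have hne : ((n : ℂ) + 1) ≠ 0 := Nat.cast_add_one_ne_zero n
        linear_combination (c n * w ^ n) * (inv_mul_cancel₀ hne)
      · rw [mem_ball_zero_iff] at hw
        calc ‖c n * w ^ n‖ = ‖c n‖ * ‖w‖ ^ n := by simp [norm_mul, norm_pow]
        _ ≤ ‖c n‖ * R ^ n :=
          mul_le_mul_of_nonneg_left (pow_le_pow_left₀ (norm_nonneg w) hw.le n) (norm_nonneg _)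
      · refine Summable.congr summable_zero fun n => ?_
        simp
    have hfin := hder.const_add a
    rwa [(hsum z).tsum_eq] at hfin



lemma entire_exists_log {W : ℂ → ℂ} (hW : Differentiable ℂ W) (hne : ∀ z, W z ≠ 0) :
    ∃ h : ℂ → ℂ, Differentiable ℂ h ∧ ∀ z, Complex.exp (h z) = W z := by
  have hdW : Differentiable ℂ (deriv W) := fun z =>
    ((hW.differentiableOn.analyticOnNhd isOpen_univ).deriv z (Set.mem_univ z)).differentiableAt
  have hg : Differentiable ℂ (fun z => deriv W z / W z) := hdW.div hW hne
  obtain ⟨h, h0, hder⟩ := entire_exists_primitive_s17 hg (Complex.log (W 0))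
  have hhd : Differentiable ℂ h := fun z => (hder z).differentiableAt
  set F : ℂ → ℂ := fun z => W z * Complex.exp (-h z) with hF
  have hFder : ∀ z, HasDerivAt F 0 z := by
    intro z
    have h1 : HasDerivAt (fun w => Complex.exp (-h w)) (Complex.exp (-h z) * (-(deriv W z / W z))) z := by
      have := ((hder z).neg).cexp
      simpa using this
    have h2 := ((hW z).hasDerivAt).mul h1
    refine h2.congr_deriv ?_
    rw [div_eq_mul_inv]
    have := hne z
    linear_combination (-(deriv W z * Complex.exp (-h z))) * (mul_inv_cancel₀ (hne z))
  have hF1 : ∀ z, F z = 1 := by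
    have hc : ∀ z, F z = F 0 :=
      fun z => is_const_of_deriv_eq_zero (fun w => (hFder w).differentiableAt)
        (fun w => (hFder w).deriv) z 0
    intro z
    rw [hc z, hF]
    simp only
    rw [h0, Complex.exp_neg, Complex.exp_log (hne 0)]
    exact mul_inv_cancel₀ (hne 0)
  refine ⟨h, hhd, fun z => ?_⟩
  have := hF1 z
  rw [hF] at this
  simp only at this
  rw [Complex.exp_neg] at this
  field_simp at this
  rw [this]


lemma borel_caratheodory_s17 {h : ℂ → ℂ} (hd : Differentiable ℂ h) {R A : ℝ}
    (hR : 0 < R) (hA : 0 < A)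
    (hub : ∀ z ∈ ball (0:ℂ) (2*R), (h z - h 0).re < A) :
    ∀ z : ℂ, ‖z‖ ≤ R → ‖h z - h 0‖ ≤ 2 * A := by
  set w : ℂ → ℂ := fun z => h z - h 0 with hw
  have hdenom : ∀ z ∈ ball (0:ℂ) (2*R), (2*A : ℂ) - w z ≠ 0 := by
    intro z hz heq
    have hre := hub z hz
    have : ((2*A : ℂ) - w z).re = 0 := by rw [heq]; simp
    simp only [Complex.sub_re, Complex.mul_re] at this
    simp only [Complex.sub_re, Complex.mul_re, Complex.ofReal_re, Complex.ofReal_im,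
      Complex.re_ofNat, Complex.im_ofNat] at this
    linarith
  set φ : ℂ → ℂ := fun z => w z / ((2*A : ℂ) - w z) with hφ
  have hφd : DifferentiableOn ℂ φ (ball (0:ℂ) (2*R)) := by
    apply DifferentiableOn.div
    · exact (hd.sub_const (h 0)).differentiableOn
    · exact (differentiable_const _ |>.sub (hd.sub_const (h 0))).differentiableOn
    · exact hdenom
  have hφ0 : φ 0 = 0 := by simp [hφ, hw]
  have hnormlt : ∀ z ∈ ball (0:ℂ) (2*R), ‖φ z‖ < 1 := by
    intro z hz
    have hre := hub z hz
    have hlt : ‖w z‖ < ‖(2*A : ℂ) - w z‖ := by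
      rw [Complex.norm_def, Complex.norm_def]
      apply Real.sqrt_lt_sqrt (Complex.normSq_nonneg _)
      simp only [Complex.normSq_apply, Complex.sub_re, Complex.sub_im, Complex.mul_re,
        Complex.mul_im, Complex.ofReal_re, Complex.ofReal_im, Complex.re_ofNat, Complex.im_ofNat]
      nlinarith
    rw [hφ]
    simp only
    rw [norm_div]
    exact (div_lt_one (lt_of_le_of_lt (norm_nonneg _) hlt)).mpr hlt
  have hmaps : Set.MapsTo φ (ball (0:ℂ) (2*R)) (ball (φ 0) 1) := by
    intro z hz
    rw [hφ0, mem_ball_zero_iff]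
    exact hnormlt z hz
  have hschwarz : ∀ z ∈ ball (0:ℂ) (2*R), ‖φ z‖ ≤ 1 / (2*R) * ‖z‖ := by
    intro z hz
    have := Complex.dist_le_div_mul_dist_of_mapsTo_ball hφd (hmaps.mono_right ball_subset_closedBall) hz
    simpa [hφ0, dist_zero_right] using this
  intro z hz
  have hzball : z ∈ ball (0:ℂ) (2*R) := by
    rw [mem_ball_zero_iff]; linarith
  have hφhalf : ‖φ z‖ ≤ 1/2 := by
    have := hschwarz z hzball
    have h2 : 1 / (2*R) * ‖z‖ ≤ 1 / (2*R) * R := by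
      apply mul_le_mul_of_nonneg_left hz (by positivity)
    calc ‖φ z‖ ≤ 1 / (2*R) * ‖z‖ := this
    _ ≤ 1 / (2*R) * R := h2
    _ = 1/2 := by field_simp
  have hkey : w z * (1 + φ z) = 2*A * φ z := by
    have hd0 := hdenom z hzball
    rw [hφ]
    simp only
    field_simp
    ring
  have hlow : (1:ℝ)/2 ≤ ‖1 + φ z‖ := by
    have := norm_sub_norm_le (1 : ℂ) (-φ z)
    simp only [norm_neg, norm_one, sub_neg_eq_add] at this
    linarith
  have hnorm : ‖w z‖ * ‖1 + φ z‖ ≤ 2 * A * (1/2) := by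
    rw [← norm_mul, hkey]
    rw [norm_mul]
    have : ‖(2*A : ℂ)‖ = 2*A := by
      simpa using abs_of_pos (by linarith : (0:ℝ) < 2*A)
    rw [this]
    exact mul_le_mul_of_nonneg_left hφhalf (by linarith)
  have : ‖w z‖ * (1/2) ≤ 2 * A * (1/2) :=
    le_trans (mul_le_mul_of_nonneg_left hlow (norm_nonneg _)) hnorm
  linarith



lemma affine_of_re_le_s17 {h : ℂ → ℂ} (hd : Differentiable ℂ h) {a b ρ : ℝ}
    (hρ0 : 0 < ρ) (hρ : ρ ≤ 3/2) (hb : 0 ≤ b)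
    (hre : ∀ z : ℂ, (h z).re ≤ a + b * ‖z‖ ^ ρ) :
    ∀ z : ℂ, h z = h 0 + deriv h 0 * z := by
  set K : ℝ → ℝ := fun R => |a| + b * (2*R) ^ ρ + ‖h 0‖ + 1 with hK
  have hKpos : ∀ R : ℝ, 0 ≤ R → 0 < K R := by
    intro R hR
    have : 0 ≤ b * (2*R) ^ ρ := mul_nonneg hb (Real.rpow_nonneg (by linarith) ρ)
    have h1 : 0 ≤ |a| := abs_nonneg a
    have h2 : 0 ≤ ‖h 0‖ := norm_nonneg _
    simp only [hK]; linarith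
  have hKmono : ∀ R₁ R₂ : ℝ, 0 ≤ R₁ → R₁ ≤ R₂ → K R₁ ≤ K R₂ := by
    intro R₁ R₂ h0 h12
    simp only [hK]
    have : (2*R₁) ^ ρ ≤ (2*R₂) ^ ρ :=
      Real.rpow_le_rpow (by linarith) (by linarith) hρ0.le
    nlinarith
  have hbnd : ∀ R : ℝ, 0 < R → ∀ z : ℂ, ‖z‖ ≤ R → ‖h z‖ ≤ ‖h 0‖ + 2 * K R := by
    intro R hR z hz
    have hub : ∀ w ∈ ball (0:ℂ) (2*R), (h w - h 0).re < K R := by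
      intro w hw
      rw [mem_ball_zero_iff] at hw
      have h1 : (h w).re ≤ a + b * ‖w‖ ^ ρ := hre w
      have h2 : b * ‖w‖ ^ ρ ≤ b * (2*R) ^ ρ :=
        mul_le_mul_of_nonneg_left (Real.rpow_le_rpow (norm_nonneg _) hw.le hρ0.le) hb
      have h3 : -(h 0).re ≤ ‖h 0‖ := by
        have := Complex.abs_re_le_norm (h 0)
        cases abs_cases (h 0).re with
        | inl hc => linarith [hc.1]
        | inr hc => linarith [hc.1]
      have h4 : a ≤ |a| := le_abs_self a
      rw [Complex.sub_re]
      simp only [hK]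
      linarith
    have := borel_caratheodory_s17 hd hR (hKpos R hR.le) hub z hz
    calc ‖h z‖ ≤ ‖h z - h 0‖ + ‖h 0‖ := by
          simpa using norm_add_le (h z - h 0) (h 0)
    _ ≤ 2 * K R + ‖h 0‖ := by linarith
    _ = ‖h 0‖ + 2 * K R := by ring
  have hder1 : ∀ (c : ℂ) (r : ℝ), 0 < r → ‖deriv h c‖ ≤ (‖h 0‖ + 2 * K (‖c‖ + r)) / r := by
    intro c r hr
    refine Complex.norm_deriv_le_of_forall_mem_sphere_norm_le hr hd.diffContOnCl fun z hz => ?_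
    rw [mem_sphere_iff_norm] at hz
    have hzn : ‖z‖ ≤ ‖c‖ + r := by
      calc ‖z‖ = ‖c + (z - c)‖ := by ring_nf
      _ ≤ ‖c‖ + ‖z - c‖ := norm_add_le _ _
      _ = ‖c‖ + r := by rw [hz]
    exact hbnd (‖c‖ + r) (by positivity) z hzn
  have hdh : Differentiable ℂ (deriv h) := fun z =>
    ((hd.differentiableOn.analyticOnNhd isOpen_univ).deriv z (Set.mem_univ z)).differentiableAt
  have hder2 : ∀ (z : ℂ) (r : ℝ), 0 < r →
      ‖deriv (deriv h) z‖ ≤ ((‖h 0‖ + 2 * K (‖z‖ + 2*r)) / r) / r := by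
    intro z r hr
    refine Complex.norm_deriv_le_of_forall_mem_sphere_norm_le hr hdh.diffContOnCl fun w hw => ?_
    rw [mem_sphere_iff_norm] at hw
    have hwn : ‖w‖ ≤ ‖z‖ + r := by
      calc ‖w‖ = ‖z + (w - z)‖ := by ring_nf
      _ ≤ ‖z‖ + ‖w - z‖ := norm_add_le _ _
      _ = ‖z‖ + r := by rw [hw]
    have := hder1 w r hr
    have hmono : K (‖w‖ + r) ≤ K (‖z‖ + 2*r) :=
      hKmono _ _ (by positivity) (by linarith)
    calc ‖deriv h w‖ ≤ (‖h 0‖ + 2 * K (‖w‖ + r)) / r := this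
    _ ≤ (‖h 0‖ + 2 * K (‖z‖ + 2*r)) / r := by gcongr
  -- second derivative vanishes
  have hzero2 : ∀ z : ℂ, deriv (deriv h) z = 0 := by
    intro z
    by_contra hne
    set E : ℝ := ‖deriv (deriv h) z‖ with hE
    have hEpos : 0 < E := norm_pos_iff.mpr hne
    set D : ℝ := ‖h 0‖ + 2 * (|a| + ‖h 0‖ + 1) + 2 * b * (6 * Real.sqrt 6) + 1 with hD
    have hDpos : 0 < D := by
      have h6 : 0 ≤ Real.sqrt 6 := Real.sqrt_nonneg 6
      have := abs_nonneg a
      have := norm_nonneg (h 0)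
      nlinarith
    have hbound : ∀ r : ℝ, 1 ≤ r → ‖z‖ ≤ r → E ≤ D / Real.sqrt r := by
      intro r hr1 hrz
      have hr : 0 < r := by linarith
      have hsq : 0 < Real.sqrt r := Real.sqrt_pos.mpr hr
      have key := hder2 z r hr
      have h6r : (1:ℝ) ≤ 6 * r := by linarith
      have hKle : K (‖z‖ + 2*r) ≤ |a| + ‖h 0‖ + 1 + b * (6 * Real.sqrt 6) * (r * Real.sqrt r) := by
        have harg : 2 * (‖z‖ + 2*r) ≤ 6 * r := by linarith
        have hrp1 : (2 * (‖z‖ + 2*r)) ^ ρ ≤ (6*r) ^ ρ :=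
          Real.rpow_le_rpow (by positivity) harg hρ0.le
        have hrp2 : (6*r) ^ ρ ≤ (6*r) ^ (3/2 : ℝ) :=
          Real.rpow_le_rpow_of_exponent_le h6r hρ
        have hrp3 : (6*r) ^ (3/2 : ℝ) = (6*r) * Real.sqrt (6*r) := by
          have : (3/2 : ℝ) = 1 + 1/2 := by norm_num
          rw [this, Real.rpow_add (by linarith), Real.rpow_one, ← Real.sqrt_eq_rpow]
        have hrp4 : Real.sqrt (6*r) = Real.sqrt 6 * Real.sqrt r := Real.sqrt_mul (by norm_num) r
        have : (2 * (‖z‖ + 2*r)) ^ ρ ≤ 6 * Real.sqrt 6 * (r * Real.sqrt r) := by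
          rw [hrp4] at hrp3
          calc (2 * (‖z‖ + 2*r)) ^ ρ ≤ (6*r) ^ (3/2:ℝ) := le_trans hrp1 hrp2
          _ = 6 * Real.sqrt 6 * (r * Real.sqrt r) := by rw [hrp3]; ring
        simp only [hK]
        have hb' : b * (2 * (‖z‖ + 2*r)) ^ ρ ≤ b * (6 * Real.sqrt 6 * (r * Real.sqrt r)) :=
          mul_le_mul_of_nonneg_left this hb
        linarith
      have step1 : E ≤ (‖h 0‖ + 2 * (|a| + ‖h 0‖ + 1 + b * (6 * Real.sqrt 6) * (r * Real.sqrt r))) / r / r := by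
        refine le_trans key ?_
        gcongr
      have hrsqle : Real.sqrt r ≤ r := by
        nlinarith [Real.sq_sqrt hr.le, Real.sqrt_nonneg r, hsq]
      have expand : (‖h 0‖ + 2 * (|a| + ‖h 0‖ + 1 + b * (6 * Real.sqrt 6) * (r * Real.sqrt r))) / r / r
          ≤ D / Real.sqrt r := by
        rw [div_div]
        rw [div_le_div_iff₀ (by positivity) hsq]
        have hrr : Real.sqrt r * Real.sqrt r = r := Real.mul_self_sqrt hr.le
        have e1 : (‖h 0‖ + 2 * (|a| + ‖h 0‖ + 1)) * Real.sqrt r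
            ≤ (‖h 0‖ + 2 * (|a| + ‖h 0‖ + 1)) * (r * r) := by
          have hc : 0 ≤ ‖h 0‖ + 2 * (|a| + ‖h 0‖ + 1) := by positivity
          have : Real.sqrt r ≤ r * r := by nlinarith
          exact mul_le_mul_of_nonneg_left this hc
        have e2 : (2 * b * (6 * Real.sqrt 6)) * (r * Real.sqrt r) * Real.sqrt r
            = (2 * b * (6 * Real.sqrt 6)) * (r * r) := by
          rw [mul_assoc ((2 * b * (6 * Real.sqrt 6))) _ _, mul_assoc r _ _, hrr]
        have e3 : 0 < r * r := by positivity
        calc (‖h 0‖ + 2 * (|a| + ‖h 0‖ + 1 + b * (6 * Real.sqrt 6) * (r * Real.sqrt r))) * Real.sqrt r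
            = (‖h 0‖ + 2 * (|a| + ‖h 0‖ + 1)) * Real.sqrt r
              + (2 * b * (6 * Real.sqrt 6)) * (r * Real.sqrt r) * Real.sqrt r := by ring
        _ ≤ (‖h 0‖ + 2 * (|a| + ‖h 0‖ + 1)) * (r * r) + (2 * b * (6 * Real.sqrt 6)) * (r * r) := by
            rw [e2]; linarith
        _ = (‖h 0‖ + 2 * (|a| + ‖h 0‖ + 1) + 2 * b * (6 * Real.sqrt 6)) * (r * r) := by ring
        _ ≤ D * (r * r) := by
            have : ‖h 0‖ + 2 * (|a| + ‖h 0‖ + 1) + 2 * b * (6 * Real.sqrt 6) ≤ D := by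
              simp only [hD]; linarith
            exact mul_le_mul_of_nonneg_right this e3.le
      exact le_trans step1 expand
    -- choose r large
    set r : ℝ := max (max 1 ‖z‖) ((D/E)^2 + 1) with hr
    have hr1 : 1 ≤ r := le_trans (le_max_left 1 ‖z‖) (le_max_left _ _)
    have hrz : ‖z‖ ≤ r := le_trans (le_max_right 1 ‖z‖) (le_max_left _ _)
    have hrD : (D/E)^2 < r := lt_of_lt_of_le (lt_add_one _) (le_max_right _ _)
    have hsqgt : D/E < Real.sqrt r := by
      rw [show D/E = |D/E| from (abs_of_pos (by positivity)).symm, ← Real.sqrt_sq_eq_abs]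
      exact Real.sqrt_lt_sqrt (sq_nonneg _) hrD
    have hfinal := hbound r hr1 hrz
    have : D / Real.sqrt r < E := by
      rw [div_lt_iff₀ (Real.sqrt_pos.mpr (by linarith))]
      calc D = E * (D/E) := by field_simp
      _ < E * Real.sqrt r := by
          exact mul_lt_mul_of_pos_left hsqgt hEpos
    linarith
  -- conclude affine
  have hconst : ∀ z : ℂ, deriv h z = deriv h 0 :=
    fun z => is_const_of_deriv_eq_zero hdh hzero2 z 0
  intro z
  set ψ : ℂ → ℂ := fun w => h w - deriv h 0 * w with hψ
  have hψd : ∀ w, HasDerivAt ψ 0 w := by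
    intro w
    have h1 : HasDerivAt (fun u : ℂ => deriv h 0 * u) (deriv h 0) w := by
      simpa using (hasDerivAt_id w).const_mul (deriv h 0)
    have h2 := ((hd w).hasDerivAt).sub h1
    rwa [hconst w, sub_self] at h2
  have : ψ z = ψ 0 :=
    is_const_of_deriv_eq_zero (fun w => (hψd w).differentiableAt)
      (fun w => (hψd w).deriv) z 0
  simp only [hψ] at this
  rw [mul_zero, sub_zero] at this
  linear_combination this




theorem exists_nonreal_exceptional_zeta (m : ℕ) (hm : 3 ≤ m) (W : ℂ → ℂ)
    (hW : Differentiable ℂ W)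
    (hzero : ∀ ζ : ℂ, W ζ = 0 → ∃ f : ℝ → ℂ, ContDiff ℝ 2 f
      ∧ (∀ x : ℝ, deriv (deriv f) x = (ζ - m * x ^ (m - 1)) ^ 2 * f x)
      ∧ (∃ M : ℝ, ∀ x, ‖f x‖ ≤ M) ∧ (∃ x, f x ≠ 0))
    (C : ℝ) (hC : 0 < C)
    (hub : ∀ ζ : ℂ, ‖W ζ‖ ≤ C * Real.exp (C * ‖ζ‖ ^ ((m : ℝ) / (m - 1))))
    (δ : ℝ) (hδ : 0 < δ)
    (hlb : ∀ x : ℝ, δ * Real.exp (δ * |x| ^ ((m : ℝ) / (m - 1))) ≤ ‖W x‖) :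
    ∃ ζ : ℂ, ζ.im ≠ 0 ∧ ∃ f : ℝ → ℂ, ContDiff ℝ 2 f
      ∧ (∀ x : ℝ, deriv (deriv f) x = (ζ - m * x ^ (m - 1)) ^ 2 * f x)
      ∧ (∃ M : ℝ, ∀ x, ‖f x‖ ≤ M) ∧ (∃ x, f x ≠ 0) := by
  by_contra hcon
  -- basic facts about the exponent
  have hm1 : (1:ℝ) ≤ m := by exact_mod_cast le_trans (by norm_num) hm
  have hm3 : (3:ℝ) ≤ m := by exact_mod_cast hm
  have hmsub : (0:ℝ) < (m:ℝ) - 1 := by linarith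
  set ρ : ℝ := (m : ℝ) / ((m:ℝ) - 1) with hρdef
  have hρ0 : 0 < ρ := by positivity
  have hρ1 : 1 < ρ := by
    rw [hρdef, lt_div_iff₀ hmsub]; linarith
  have hρ32 : ρ ≤ 3/2 := by
    rw [hρdef, div_le_iff₀ hmsub]; linarith
  -- W has no zeros
  have hne : ∀ ζ : ℂ, W ζ ≠ 0 := by
    intro ζ h0
    by_cases him : ζ.im = 0
    · have hζ : ζ = ((ζ.re : ℝ) : ℂ) := by
        apply Complex.ext <;> simp [him]
      rw [hζ] at h0
      have := hlb ζ.re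
      rw [h0, norm_zero] at this
      have hpos : 0 < δ * Real.exp (δ * |ζ.re| ^ ρ) := by positivity
      linarith
    · exact hcon ⟨ζ, him, hzero ζ h0⟩
  -- logarithm
  obtain ⟨h, hhd, hhW⟩ := entire_exists_log hW hne
  -- growth bound on Re h
  have hre : ∀ z : ℂ, (h z).re ≤ Real.log C + C * ‖z‖ ^ ρ := by
    intro z
    have h1 : Real.exp ((h z).re) = ‖W z‖ := by
      rw [← hhW z, Complex.norm_exp]
    have h2 : ‖W z‖ ≤ C * Real.exp (C * ‖z‖ ^ ρ) := hub z
    have h3 : C * Real.exp (C * ‖z‖ ^ ρ) = Real.exp (Real.log C + C * ‖z‖ ^ ρ) := by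
      rw [Real.exp_add, Real.exp_log hC]
    rw [← Real.exp_le_exp, h1, h3.symm]
    exact h2
  -- h is affine
  have haff := affine_of_re_le_s17 hhd hρ0 hρ32 hC.le hre
  set p : ℝ := (h 0).re - Real.log δ with hp
  set q : ℝ := (deriv h 0).re with hq
  -- key inequality on reals
  have hkey : ∀ x : ℝ, 0 ≤ x → δ * x ^ ρ ≤ p + q * x := by
    intro x hx
    have h1 := hlb x
    rw [_root_.abs_of_nonneg hx] at h1
    have h2 : ‖W (x:ℂ)‖ = Real.exp ((h 0).re + q * x) := by
      rw [← hhW (x:ℂ), Complex.norm_exp, haff (x:ℂ)]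
      congr 1
      simp [Complex.add_re, Complex.mul_re, hq]
    have h3 : δ * Real.exp (δ * x ^ ρ) = Real.exp (Real.log δ + δ * x ^ ρ) := by
      rw [Real.exp_add, Real.exp_log hδ]
    rw [h2, h3] at h1
    rw [Real.exp_le_exp] at h1
    simp only [hp]
    linarith
  -- choose a large x to derive a contradiction
  set t : ℝ := max 1 ((|p| + |q| + 1)/δ) with ht
  have ht1 : 1 ≤ t := le_max_left _ _
  have ht0 : 0 ≤ t := by linarith
  have htδ : |p| + |q| + 1 ≤ δ * t := by
    have := le_max_right 1 ((|p| + |q| + 1)/δ)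
    calc |p| + |q| + 1 = δ * ((|p| + |q| + 1)/δ) := by field_simp
    _ ≤ δ * t := mul_le_mul_of_nonneg_left this hδ.le
  set x : ℝ := t ^ (m - 1) with hx
  have hx1 : 1 ≤ x := one_le_pow₀ ht1
  have hx0 : 0 ≤ x := by linarith
  have hxρ : x ^ ρ = x * t := by
    have hmne : m - 1 ≠ 0 := by omega
    have h1m : (1:ℕ) ≤ m := by omega
    have hcast : ((m - 1 : ℕ) : ℝ) = (m:ℝ) - 1 := by
      rw [Nat.cast_sub h1m, Nat.cast_one]
    have hρsplit : ρ = 1 + (((m - 1 : ℕ) : ℝ))⁻¹ := by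
      rw [hcast, hρdef]; field_simp; ring
    have hxpos : 0 < x := by linarith
    rw [hρsplit, Real.rpow_add hxpos, Real.rpow_one]
    congr 1
    rw [hx]
    exact Real.pow_rpow_inv_natCast ht0 hmne
  have hfin := hkey x hx0
  have hge : p + q * x + 1 ≤ δ * x ^ ρ := by
    rw [hxρ]
    have e1 : x * (|p| + |q| + 1) ≤ x * (δ * t) := mul_le_mul_of_nonneg_left htδ hx0
    have e2 : δ * (x * t) = x * (δ * t) := by ring
    nlinarith [le_abs_self p, le_abs_self q, abs_nonneg p, abs_nonneg q]
  linarith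
end
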